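/- arXiv:2204.02487 — 3 statements merged into one kernel-verified Lean document; each statement's English description precedes it below -/
import Mathlib

section
/- Let A, B ⊂ ℝ^d be disjoint finite sets such that A is high above B, and let {p} ∪ K be a (d+1)-element subset of A ∪ B with p ∉ K and π(p) in the interior of conv(π(K)). Then: (i) if {p} ∪ K is a convex cup and p ∈ A, then K ⊆ A; (ii) if {p} ∪ K is a convex cap and p ∈ B, then K ⊆ B. -/
open scoped BigOperators ENNReal

noncomputable section

/-- The projection `π : ℝ^d → ℝ^{d−1}` forgetting the last coordinate. -/
def proj {d : ℕ} (x : EuclideanSpace ℝ (Fin d)) : EuclideanSpace ℝ (Fin (d - 1)) :=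
  WithLp.toLp 2 (fun i => x (Fin.castLE (Nat.sub_le d 1) i))

/-- The height `h(x) = x_d`, the last coordinate of `x ∈ ℝ^d` (junk value `0` for `d = 0`). -/
def hCoord {d : ℕ} (x : EuclideanSpace ℝ (Fin d)) : ℝ :=
  if h : 0 < d then x ⟨d - 1, by omega⟩ else 0

/-- The first coordinate of `x ∈ ℝ^d` (junk value `0` for `d = 0`). -/
def firstCoord {d : ℕ} (x : EuclideanSpace ℝ (Fin d)) : ℝ :=
  if h : 0 < d then x ⟨0, h⟩ else 0

/-- A set `Q ⊆ ℝ^m` is in affinely general position if any `m+1` of its points are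
affinely independent. -/
def AffGenPos {m : ℕ} (Q : Set (EuclideanSpace ℝ (Fin m))) : Prop :=
  ∀ s : Finset (EuclideanSpace ℝ (Fin m)), ↑s ⊆ Q → s.card = m + 1 →
    AffineIndependent ℝ (fun x : s => (x : EuclideanSpace ℝ (Fin m)))

/-- A set `Q ⊆ ℝ^d` is convex independent if it is in general position and no point of `Q`
lies in the convex hull of the other points of `Q`. -/
def ConvIndep {d : ℕ} (Q : Set (EuclideanSpace ℝ (Fin d))) : Prop :=
  AffGenPos Q ∧ ∀ q ∈ Q, q ∉ convexHull ℝ (Q \ {q})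

/-- A finite set `P ⊆ ℝ^d` is regular if (R1) the projection of `P` to each coordinate axis is
injective; (R2) `π(P)` is in affinely general position in `ℝ^{d−1}`; (R3) for every generic pair
`(S, T)` of `P` (disjoint nonempty subsets with `|S| + |T| = d + 1`), the affine spans of `π(S)`
and `π(T)` intersect in exactly one point. -/
def Regular {d : ℕ} (P : Set (EuclideanSpace ℝ (Fin d))) : Prop :=
  (∀ i : Fin d, Set.InjOn (fun p : EuclideanSpace ℝ (Fin d) => p i) P) ∧
  AffGenPos (proj '' P) ∧
  (∀ S T : Finset (EuclideanSpace ℝ (Fin d)), ↑S ⊆ P → ↑T ⊆ P → Disjoint S T →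
    S.Nonempty → T.Nonempty → S.card + T.card = d + 1 →
    ∃! q : EuclideanSpace ℝ (Fin (d - 1)),
      q ∈ affineSpan ℝ (proj '' (S : Set (EuclideanSpace ℝ (Fin d)))) ∧
      q ∈ affineSpan ℝ (proj '' (T : Set (EuclideanSpace ℝ (Fin d)))))

/-- `A` is high above `B` if `A`, `B` are disjoint, `A ∪ B` is regular, and for every generic pair
`(S, T)` of `A ∪ B` with `S ⊆ A`, `T ⊆ B`, the points `s ∈ aff S`, `t ∈ aff T` with
`π(s) = π(t)` satisfy `h(s) > h(t)`. -/
def HighAbove {d : ℕ} (A B : Set (EuclideanSpace ℝ (Fin d))) : Prop :=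
  Disjoint A B ∧ Regular (A ∪ B) ∧
  ∀ S T : Finset (EuclideanSpace ℝ (Fin d)), ↑S ⊆ A → ↑T ⊆ B →
    S.Nonempty → T.Nonempty → S.card + T.card = d + 1 →
    ∀ s t : EuclideanSpace ℝ (Fin d),
      s ∈ affineSpan ℝ (S : Set (EuclideanSpace ℝ (Fin d))) →
      t ∈ affineSpan ℝ (T : Set (EuclideanSpace ℝ (Fin d))) →
      proj s = proj t → hCoord t < hCoord s

/-- A regular set `P ⊆ ℝ^d` is a convex cup if whenever `p, p₁, …, p_d ∈ P` are distinct points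
with `π(p) = ∑ cᵢ π(pᵢ)`, all `cᵢ ∈ (0,1)` and `∑ cᵢ = 1`, then `h(p) < ∑ cᵢ h(pᵢ)`. -/
def ConvexCup {d : ℕ} (P : Set (EuclideanSpace ℝ (Fin d))) : Prop :=
  Regular P ∧
  ∀ (p : EuclideanSpace ℝ (Fin d)) (q : Fin d → EuclideanSpace ℝ (Fin d)) (c : Fin d → ℝ),
    p ∈ P → (∀ i, q i ∈ P) → Function.Injective q → (∀ i, p ≠ q i) →
    (∀ i, c i ∈ Set.Ioo (0 : ℝ) 1) → ∑ i, c i = 1 →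
    proj p = ∑ i, c i • proj (q i) →
    hCoord p < ∑ i, c i * hCoord (q i)

/-- A regular set `P ⊆ ℝ^d` is a convex cap if whenever `p, p₁, …, p_d ∈ P` are distinct points
with `π(p) = ∑ cᵢ π(pᵢ)`, all `cᵢ ∈ (0,1)` and `∑ cᵢ = 1`, then `h(p) > ∑ cᵢ h(pᵢ)`. -/
def ConvexCap {d : ℕ} (P : Set (EuclideanSpace ℝ (Fin d))) : Prop :=
  Regular P ∧
  ∀ (p : EuclideanSpace ℝ (Fin d)) (q : Fin d → EuclideanSpace ℝ (Fin d)) (c : Fin d → ℝ),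
    p ∈ P → (∀ i, q i ∈ P) → Function.Injective q → (∀ i, p ≠ q i) →
    (∀ i, c i ∈ Set.Ioo (0 : ℝ) 1) → ∑ i, c i = 1 →
    proj p = ∑ i, c i • proj (q i) →
    ∑ i, c i * hCoord (q i) < hCoord p

/-- `∂_π P`, the set of points of `P` whose projection does not lie in the interior of the
convex hull of `π(P)`. -/
def piBoundary {d : ℕ} (P : Set (EuclideanSpace ℝ (Fin d))) : Set (EuclideanSpace ℝ (Fin d)) :=
  {p ∈ P | proj p ∉ interior (convexHull ℝ (proj '' P))}

/-- The rank of `p` in `P`: the number of points of `P` whose first coordinate is at most that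
of `p`.  If `P` is sorted as `p₁, p₂, …` by strictly increasing first coordinate, then
`rank P pₜ = t`. -/
def rank {d : ℕ} (P : Set (EuclideanSpace ℝ (Fin d))) (p : EuclideanSpace ℝ (Fin d)) : ℕ :=
  Set.ncard {q ∈ P | firstCoord q ≤ firstCoord p}

/-- The subset `P_{a,b} = {p_t ∈ P : t ≡ a (mod b)}` of `P` (sorted by first coordinate). -/
def modClass {d : ℕ} (a b : ℕ) (P : Set (EuclideanSpace ℝ (Fin d))) :
    Set (EuclideanSpace ℝ (Fin d)) :=
  {p ∈ P | rank P p % b = a % b}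

/-- `d`-oscillators, defined recursively: (O1) any one-point set, and any finite subset of `ℝ¹`,
is an oscillator; (O2) for `d ≥ 2` a finite set `P` with `|P| ≥ 2` is a `d`-oscillator if it is
regular, both `P_{1,2}` and `P_{2,2}` are `d`-oscillators, one of `P_{1,2}`, `P_{2,2}` is high
above the other, and `π(P)` is a `(d−1)`-oscillator. -/
inductive IsOscillator : (d : ℕ) → Set (EuclideanSpace ℝ (Fin d)) → Prop
  | single {d : ℕ} (p : EuclideanSpace ℝ (Fin d)) : IsOscillator d {p}
  | dimOne (P : Set (EuclideanSpace ℝ (Fin 1))) (hfin : P.Finite) : IsOscillator 1 P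
  | step {d : ℕ} (P : Set (EuclideanSpace ℝ (Fin d))) (hd : 2 ≤ d) (hfin : P.Finite)
      (hcard : 2 ≤ P.ncard) (hreg : Regular P)
      (h1 : IsOscillator d (modClass 1 2 P))
      (h2 : IsOscillator d (modClass 2 2 P))
      (hab : HighAbove (modClass 1 2 P) (modClass 2 2 P) ∨
        HighAbove (modClass 2 2 P) (modClass 1 2 P))
      (hproj : IsOscillator (d - 1) (proj '' P)) : IsOscillator d P

/-- A finite set `P ⊆ ℝ^d` is generic if for any disjoint nonempty subsets `S, T` of `P` with
`|S| + |T| = d + 2`, the affine spans of `S` and `T` intersect in exactly one point. -/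
def GenericSet {d : ℕ} (P : Set (EuclideanSpace ℝ (Fin d))) : Prop :=
  ∀ S T : Finset (EuclideanSpace ℝ (Fin d)), ↑S ⊆ P → ↑T ⊆ P → Disjoint S T →
    S.Nonempty → T.Nonempty → S.card + T.card = d + 2 →
    ∃! x : EuclideanSpace ℝ (Fin d),
      x ∈ affineSpan ℝ (S : Set (EuclideanSpace ℝ (Fin d))) ∧
      x ∈ affineSpan ℝ (T : Set (EuclideanSpace ℝ (Fin d)))

/-- The point of `ℝ^d` obtained from `y ∈ ℝ^{d−1}` by appending a last coordinate `t`. -/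
def lift {d : ℕ} (y : EuclideanSpace ℝ (Fin (d - 1))) (t : ℝ) : EuclideanSpace ℝ (Fin d) :=
  WithLp.toLp 2 (fun i => if h : (i : ℕ) < d - 1 then y ⟨i, h⟩ else t)

/-- `(N)_ε = ∑_{k≥0} a_k ε^{k+1}` where `N = ∑_{k≥0} a_k 2^k` is the binary expansion of `N`. -/
def binRep (ε : ℝ) (N : ℕ) : ℝ :=
  ∑ k ∈ Finset.range (N + 1), if N.testBit k then ε ^ (k + 1) else 0

/-- The stretch `str_P(C) = i_k − i_1` of a subset `C` of a `d`-oscillator `P` (sorted by first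
coordinate), where `i_1 < … < i_k` are the indices of the elements of `C` in `P`. -/
def stretch {d : ℕ} (P C : Set (EuclideanSpace ℝ (Fin d))) : ℕ :=
  sSup (rank P '' C) - sInf (rank P '' C)

/-- `Δ_d(k)`: the minimum stretch `str_P(C)` over all finite `d`-oscillators `P` and all
`k`-point convex independent subsets `C ⊆ P` (`= ∞` if there are none). -/
def Delta (d k : ℕ) : ℝ≥0∞ :=
  sInf {s : ℝ≥0∞ | ∃ P C : Set (EuclideanSpace ℝ (Fin d)),
    IsOscillator d P ∧ C ⊆ P ∧ ConvIndep C ∧ C.ncard = k ∧ s = (stretch P C : ℝ≥0∞)}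

/-- `Δ'_d(k)`: the minimum stretch `str_P(C)` over all finite `d`-oscillators `P` and all
`k`-point subsets `C ⊆ P` that are convex cups or convex caps (`= ∞` if there are none). -/
def Delta' (d k : ℕ) : ℝ≥0∞ :=
  sInf {s : ℝ≥0∞ | ∃ P C : Set (EuclideanSpace ℝ (Fin d)),
    IsOscillator d P ∧ C ⊆ P ∧ (ConvexCup C ∨ ConvexCap C) ∧ C.ncard = k ∧
      s = (stretch P C : ℝ≥0∞)}

namespace Stmt7Aux

/-- `proj` as a linear map. -/
def projLM (d : ℕ) : EuclideanSpace ℝ (Fin d) →ₗ[ℝ] EuclideanSpace ℝ (Fin (d - 1)) where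
  toFun := proj
  map_add' x y := rfl
  map_smul' a x := by simp only [RingHom.id_apply]; rfl

/-- `hCoord` as a linear map. -/
def hLM (d : ℕ) : EuclideanSpace ℝ (Fin d) →ₗ[ℝ] ℝ where
  toFun := hCoord
  map_add' x y := by unfold hCoord; split <;> simp
  map_smul' a x := by unfold hCoord; split <;> simp

lemma proj_sum {d : ℕ} {ι : Type*} (s : Finset ι) (f : ι → EuclideanSpace ℝ (Fin d)) :
    proj (∑ i ∈ s, f i) = ∑ i ∈ s, proj (f i) :=
  map_sum (projLM d) f s

lemma proj_smul {d : ℕ} (a : ℝ) (x : EuclideanSpace ℝ (Fin d)) :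
    proj (a • x) = a • proj x := (projLM d).map_smul a x

lemma proj_add {d : ℕ} (x y : EuclideanSpace ℝ (Fin d)) :
    proj (x + y) = proj x + proj y := (projLM d).map_add x y

lemma hCoord_sum {d : ℕ} {ι : Type*} (s : Finset ι) (f : ι → EuclideanSpace ℝ (Fin d)) :
    hCoord (∑ i ∈ s, f i) = ∑ i ∈ s, hCoord (f i) :=
  map_sum (hLM d) f s

lemma hCoord_smul {d : ℕ} (a : ℝ) (x : EuclideanSpace ℝ (Fin d)) :
    hCoord (a • x) = a * hCoord x := (hLM d).map_smul a x

lemma hCoord_add {d : ℕ} (x y : EuclideanSpace ℝ (Fin d)) :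
    hCoord (x + y) = hCoord x + hCoord y := (hLM d).map_add x y

lemma sum_smul_mem_affineSpan {V : Type*} [AddCommGroup V] [Module ℝ V] {ι : Type*}
    (s : Finset ι) (w : ι → ℝ) (f : ι → V) (hw : ∑ i ∈ s, w i = 1) :
    (∑ i ∈ s, w i • f i) ∈ affineSpan ℝ (f '' ↑s) := by
  classical
  have h1 : ∑ i : {x // x ∈ s}, w i = 1 := by
    rw [Finset.univ_eq_attach, Finset.sum_attach s w]; exact hw
  have h2 := affineCombination_mem_affineSpan (k := ℝ) h1 (fun i : {x // x ∈ s} => f i)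
  rw [Finset.affineCombination_eq_linear_combination _ _ _ h1] at h2
  rw [Finset.univ_eq_attach, Finset.sum_attach s (fun i => w i • f i)] at h2
  rwa [show Set.range (fun i : {x // x ∈ s} => f i) = f '' ↑s from
    (Set.image_eq_range f ↑s).symm] at h2

/-- The key construction: points in the affine spans of `{p} ∪ q(I)` and `q(Iᶜ)` with equal
projections, and explicit heights. -/
lemma key_pair {d : ℕ} [DecidableEq (EuclideanSpace ℝ (Fin d))]
    (p : EuclideanSpace ℝ (Fin d)) (q : Fin d → EuclideanSpace ℝ (Fin d))
    (c : Fin d → ℝ) (I : Finset (Fin d)) (γ : ℝ) (hγ : γ = ∑ i ∈ Iᶜ, c i) (hγpos : 0 < γ)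
    (hsum : ∑ i, c i = 1) (hcomb : proj p = ∑ i, c i • proj (q i)) :
    ∃ s t : EuclideanSpace ℝ (Fin d),
      s ∈ affineSpan ℝ ((insert p (I.image q) : Finset (EuclideanSpace ℝ (Fin d))) :
        Set (EuclideanSpace ℝ (Fin d))) ∧
      t ∈ affineSpan ℝ ((Iᶜ.image q : Finset (EuclideanSpace ℝ (Fin d))) :
        Set (EuclideanSpace ℝ (Fin d))) ∧
      proj s = proj t ∧
      hCoord s = γ⁻¹ * (hCoord p - ∑ i ∈ I, c i * hCoord (q i)) ∧
      hCoord t = γ⁻¹ * (∑ i ∈ Iᶜ, c i * hCoord (q i)) := by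
  classical
  have hγne : γ ≠ 0 := ne_of_gt hγpos
  have hIsum : ∑ i ∈ I, c i = 1 - γ := by
    have := Finset.sum_add_sum_compl I c
    rw [hsum] at this; rw [hγ]; linarith
  set s0 : EuclideanSpace ℝ (Fin d) := γ⁻¹ • p + ∑ i ∈ I, (-(c i) * γ⁻¹) • q i with hs0
  set t0 : EuclideanSpace ℝ (Fin d) := ∑ i ∈ Iᶜ, (c i * γ⁻¹) • q i with ht0
  refine ⟨s0, t0, ?_, ?_, ?_, ?_, ?_⟩
  · -- s0 ∈ affineSpan of insert p (I.image q)
    have hw : (γ⁻¹ + ∑ i ∈ I, (-(c i) * γ⁻¹)) = 1 := by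
      have : ∑ i ∈ I, (-(c i) * γ⁻¹) = -((1 - γ) * γ⁻¹) := by
        rw [← Finset.sum_mul, Finset.sum_neg_distrib, hIsum]; ring
      rw [this]; field_simp; ring
    -- use Option (Fin d) as index
    set F : Option (Fin d) → EuclideanSpace ℝ (Fin d) := fun o => o.elim p q with hF
    set W : Option (Fin d) → ℝ := fun o => o.elim γ⁻¹ (fun i => -(c i) * γ⁻¹) with hW
    set Sf : Finset (Option (Fin d)) := insert none (I.image some) with hSf
    have hnotmem : (none : Option (Fin d)) ∉ I.image some := by simp
    have hWsum : ∑ o ∈ Sf, W o = 1 := by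
      rw [hSf, Finset.sum_insert hnotmem,
        Finset.sum_image (fun _ _ _ _ h => Option.some_injective _ h)]
      exact hw
    have hval : ∑ o ∈ Sf, W o • F o = s0 := by
      rw [hSf, Finset.sum_insert hnotmem,
        Finset.sum_image (fun _ _ _ _ h => Option.some_injective _ h)]
      rfl
    have hmem := sum_smul_mem_affineSpan Sf W F hWsum
    rw [hval] at hmem
    have himg : F '' ↑Sf =
        ((insert p (I.image q) : Finset (EuclideanSpace ℝ (Fin d))) :
          Set (EuclideanSpace ℝ (Fin d))) := by
      rw [hSf, Finset.coe_insert, Finset.coe_image, Set.image_insert_eq, Set.image_image,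
        Finset.coe_insert, Finset.coe_image]
      rfl
    rwa [himg] at hmem
  · have hWsum : ∑ i ∈ Iᶜ, c i * γ⁻¹ = 1 := by
      rw [← Finset.sum_mul, ← hγ]; field_simp
    have hmem := sum_smul_mem_affineSpan Iᶜ (fun i => c i * γ⁻¹) q hWsum
    rw [Finset.coe_image]
    exact hmem
  · -- equal projections
    have hsplit : ∑ i ∈ I, c i • proj (q i) + ∑ i ∈ Iᶜ, c i • proj (q i) = proj p := by
      rw [hcomb]; exact Finset.sum_add_sum_compl I _
    have e1 : ∑ i ∈ I, proj ((-(c i) * γ⁻¹) • q i)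
        = -(γ⁻¹ • ∑ i ∈ I, c i • proj (q i)) := by
      rw [Finset.smul_sum, ← Finset.sum_neg_distrib]
      refine Finset.sum_congr rfl fun i _ => ?_
      rw [proj_smul, smul_smul, show -(c i) * γ⁻¹ = -(γ⁻¹ * c i) by ring, neg_smul]
    have e2 : ∑ i ∈ Iᶜ, proj ((c i * γ⁻¹) • q i)
        = γ⁻¹ • ∑ i ∈ Iᶜ, c i • proj (q i) := by
      rw [Finset.smul_sum]
      refine Finset.sum_congr rfl fun i _ => ?_
      rw [proj_smul, smul_smul, mul_comm]
    rw [hs0, ht0, proj_add, proj_sum, proj_sum, proj_smul, e1, e2, ← hsplit, smul_add]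
    abel
  · rw [hs0, hCoord_add, hCoord_sum, hCoord_smul]
    have e1 : ∑ i ∈ I, hCoord ((-(c i) * γ⁻¹) • q i)
        = -(γ⁻¹ * ∑ i ∈ I, c i * hCoord (q i)) := by
      rw [Finset.mul_sum, ← Finset.sum_neg_distrib]
      refine Finset.sum_congr rfl fun i _ => ?_
      rw [hCoord_smul]; ring
    rw [e1]; ring
  · rw [ht0, hCoord_sum, Finset.mul_sum]
    refine Finset.sum_congr rfl fun i _ => ?_
    rw [hCoord_smul]; ring

end Stmt7Aux

open Stmt7Aux in
theorem stmt7 (d : ℕ) (hd : 2 ≤ d) (A B : Set (EuclideanSpace ℝ (Fin d)))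
    (hAfin : A.Finite) (hBfin : B.Finite) (hAB : HighAbove A B)
    (p : EuclideanSpace ℝ (Fin d)) (K : Set (EuclideanSpace ℝ (Fin d)))
    (hpK : p ∉ K) (hsub : insert p K ⊆ A ∪ B) (hcard : (insert p K).ncard = d + 1)
    (hint : proj p ∈ interior (convexHull ℝ (proj '' K))) :
    (ConvexCup (insert p K) → p ∈ A → K ⊆ A) ∧
    (ConvexCap (insert p K) → p ∈ B → K ⊆ B) := by
  classical
  obtain ⟨hdisj, hreg, hhigh⟩ := hAB
  have hPfin : (A ∪ B).Finite := hAfin.union hBfin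
  have hKP : K ⊆ A ∪ B := fun x hx => hsub (Set.mem_insert_of_mem p hx)
  have hKfin : K.Finite := hPfin.subset hKP
  have hKncard : K.ncard = d := by
    have h1 := Set.ncard_insert_of_notMem hpK hKfin
    omega
  set Kf : Finset (EuclideanSpace ℝ (Fin d)) := hKfin.toFinset with hKfdef
  have hKfcoe : (Kf : Set (EuclideanSpace ℝ (Fin d))) = K := hKfin.coe_toFinset
  have hKfcard : Kf.card = d := by rw [← Set.ncard_coe_finset, hKfcoe, hKncard]
  have hcard' : Fintype.card ↥Kf = d := by rw [Fintype.card_coe]; exact hKfcard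
  let e : ↥Kf ≃ Fin d := Fintype.equivFinOfCardEq hcard'
  set q : Fin d → EuclideanSpace ℝ (Fin d) := fun i => ↑(e.symm i) with hqdef
  have hqK : ∀ i, q i ∈ K := fun i => by
    have h := (e.symm i).2
    rw [← hKfcoe]; exact h
  have hqinj : Function.Injective q := fun i j h => by
    have := e.symm.injective (Subtype.ext h); exact this
  have hqsurj : ∀ x ∈ K, ∃ i, q i = x := by
    intro x hx
    refine ⟨e ⟨x, ?_⟩, by simp [hqdef]⟩
    exact hKfin.mem_toFinset.mpr hx
  -- affine span of the projection is everything
  have hne : (interior (convexHull ℝ (proj '' K))).Nonempty := ⟨_, hint⟩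
  have hspan : affineSpan ℝ (proj '' K) = ⊤ := by
    have h1 := (convex_convexHull ℝ (proj '' K)).interior_nonempty_iff_affineSpan_eq_top.mp hne
    rwa [affineSpan_convexHull] at h1
  set J : Finset (EuclideanSpace ℝ (Fin (d - 1))) := Kf.image proj with hJdef
  have hJcoe : (J : Set (EuclideanSpace ℝ (Fin (d - 1)))) = proj '' K := by
    rw [hJdef, Finset.coe_image, hKfcoe]
  have hvs : vectorSpan ℝ (J : Set (EuclideanSpace ℝ (Fin (d - 1)))) = ⊤ := by
    rw [hJcoe, ← direction_affineSpan, hspan, AffineSubspace.direction_top]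
  have hJcard : J.card = d := by
    refine le_antisymm (le_trans Finset.card_image_le hKfcard.le) ?_
    by_contra hlt
    push_neg at hlt
    have hJne : J.Nonempty := by
      rw [hJdef, Finset.image_nonempty, ← Finset.card_pos, hKfcard]; omega
    have hJpos : 0 < J.card := Finset.card_pos.mpr hJne
    have hc0 : J.card = (J.card - 1) + 1 := by omega
    have h2 := finrank_vectorSpan_image_finset_le ℝ id J hc0
    rw [Finset.image_id, hvs] at h2
    have h3 : Module.finrank ℝ
        (⊤ : Submodule ℝ (EuclideanSpace ℝ (Fin (d - 1)))) = d - 1 := by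
      rw [finrank_top, finrank_euclideanSpace_fin]
    rw [h3] at h2
    omega
  have hprojinj : Set.InjOn proj K := by
    rw [← hKfcoe]
    exact Finset.card_image_iff.mp (by rw [← hJdef, hJcard, hKfcard])
  -- affine basis of the projections
  have hind : AffineIndependent ℝ
      (fun x : ↥J => (x : EuclideanSpace ℝ (Fin (d - 1)))) := by
    apply hreg.2.1 J
    · rw [hJcoe]; exact Set.image_mono hKP
    · rw [hJcard]; omega
  have htot : affineSpan ℝ
      (Set.range (fun x : ↥J => (x : EuclideanSpace ℝ (Fin (d - 1))))) = ⊤ := by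
    rw [Subtype.range_coe_subtype]
    show affineSpan ℝ (J : Set (EuclideanSpace ℝ (Fin (d - 1)))) = ⊤
    rw [hJcoe]; exact hspan
  let b : AffineBasis ↥J ℝ (EuclideanSpace ℝ (Fin (d - 1))) := ⟨_, hind, htot⟩
  have hbrange : Set.range ⇑b = proj '' K := by
    show Set.range (fun x : ↥J => (x : EuclideanSpace ℝ (Fin (d - 1)))) = proj '' K
    rw [Subtype.range_coe_subtype]
    show (J : Set (EuclideanSpace ℝ (Fin (d - 1)))) = proj '' K
    exact hJcoe
  have hpos : ∀ j : ↥J, 0 < b.coord j (proj p) := by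
    have h1 := b.interior_convexHull
    rw [hbrange] at h1
    have h2 : proj p ∈ {x | ∀ i, 0 < b.coord i x} := h1 ▸ hint
    exact h2
  set ψ : Fin d → ↥J := fun i =>
    ⟨proj (q i), by rw [hJdef]; exact Finset.mem_image_of_mem proj (e.symm i).2⟩ with hψdef
  have hψinj : Function.Injective ψ := fun i j h =>
    hqinj (hprojinj (hqK i) (hqK j) (congrArg Subtype.val h))
  have hψbij : Function.Bijective ψ :=
    (Fintype.bijective_iff_injective_and_card ψ).mpr
      ⟨hψinj, by rw [Fintype.card_fin, Fintype.card_coe, hJcard]⟩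
  set c : Fin d → ℝ := fun i => b.coord (ψ i) (proj p) with hcdef
  have hcsum : ∑ i, c i = 1 := by
    rw [Fintype.sum_bijective ψ hψbij _ (fun j => b.coord j (proj p)) (fun i => rfl)]
    exact b.sum_coord_apply_eq_one (proj p)
  have hcomb : proj p = ∑ i, c i • proj (q i) := by
    have h2 : ∑ i, c i • proj (q i) = ∑ j, b.coord j (proj p) • b j :=
      Fintype.sum_bijective ψ hψbij _ _ (fun i => rfl)
    rw [h2, b.linear_combination_coord_eq_self]
  have hcIoo : ∀ i, c i ∈ Set.Ioo (0 : ℝ) 1 := by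
    intro i
    refine ⟨hpos (ψ i), ?_⟩
    obtain ⟨j, hji⟩ : ∃ j : Fin d, j ≠ i := by
      have hi2 := i.isLt
      rcases Nat.lt_or_ge (i.val + 1) d with h | h
      · exact ⟨⟨i.val + 1, h⟩, Fin.ne_of_val_ne (by simp only [Fin.val_mk]; omega)⟩
      · exact ⟨⟨0, by omega⟩, Fin.ne_of_val_ne (by simp only [Fin.val_mk]; omega)⟩
    have hlt : c i < ∑ k, c k :=
      Finset.single_lt_sum hji (Finset.mem_univ i) (Finset.mem_univ j)
        (hpos (ψ j)) (fun k _ _ => le_of_lt (hpos (ψ k)))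
    rwa [hcsum] at hlt
  have hpne : ∀ i, p ≠ q i := fun i h => hpK (h ▸ hqK i)
  have hpmem : p ∈ insert p K := Set.mem_insert p K
  have hqmem' : ∀ i, q i ∈ insert p K := fun i => Set.mem_insert_of_mem p (hqK i)
  constructor
  · -- convex cup case
    intro hcup hpA x hxK
    by_contra hxA
    have hxB : x ∈ B := (hKP hxK).resolve_left hxA
    obtain ⟨i0, hi0⟩ := hqsurj x hxK
    set I : Finset (Fin d) := Finset.univ.filter (fun i => q i ∈ A) with hIdef
    have hIc : ∀ i ∈ Iᶜ, q i ∈ B := by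
      intro i hi
      have hmem : q i ∈ A ∪ B := hKP (hqK i)
      have : q i ∉ A := by
        intro hA
        simp only [hIdef, Finset.mem_compl, Finset.mem_filter, Finset.mem_univ,
          true_and] at hi
        exact hi hA
      exact hmem.resolve_left this
    have hi0c : i0 ∈ Iᶜ := by
      simp only [hIdef, Finset.mem_compl, Finset.mem_filter, Finset.mem_univ, true_and]
      rw [hi0]; exact hxA
    set γ : ℝ := ∑ i ∈ Iᶜ, c i with hγdef
    have hγpos : 0 < γ :=
      Finset.sum_pos (fun i _ => (hcIoo i).1) ⟨i0, hi0c⟩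
    obtain ⟨s, t, hsS, htT, hst, hhs, hht⟩ :=
      key_pair p q c I γ hγdef hγpos hcsum hcomb
    have hSsub : ((insert p (I.image q) : Finset (EuclideanSpace ℝ (Fin d))) :
        Set (EuclideanSpace ℝ (Fin d))) ⊆ A := by
      intro y hy
      simp only [Finset.coe_insert, Set.mem_insert_iff, Finset.coe_image,
        Set.mem_image, Finset.mem_coe] at hy
      rcases hy with rfl | ⟨i, hi, rfl⟩
      · exact hpA
      · simp only [hIdef, Finset.mem_filter] at hi; exact hi.2
    have hTsub : ((Iᶜ.image q : Finset (EuclideanSpace ℝ (Fin d))) :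
        Set (EuclideanSpace ℝ (Fin d))) ⊆ B := by
      intro y hy
      simp only [Finset.coe_image, Set.mem_image, Finset.mem_coe] at hy
      obtain ⟨i, hi, rfl⟩ := hy
      exact hIc i hi
    have hpnotimg : p ∉ I.image q := by
      intro h
      obtain ⟨i, _, hi⟩ := Finset.mem_image.mp h
      exact hpK (hi ▸ hqK i)
    have hcards : (insert p (I.image q)).card + (Iᶜ.image q).card = d + 1 := by
      rw [Finset.card_insert_of_notMem hpnotimg,
        Finset.card_image_of_injective _ hqinj, Finset.card_image_of_injective _ hqinj]
      have := Finset.card_add_card_compl I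
      rw [Fintype.card_fin] at this
      omega
    have hineq := hhigh (insert p (I.image q)) (Iᶜ.image q) hSsub hTsub
      ⟨p, Finset.mem_insert_self p _⟩ ⟨q i0, Finset.mem_image_of_mem q hi0c⟩
      hcards s t hsS htT hst
    -- hineq : hCoord t < hCoord s
    rw [hhs, hht] at hineq
    have h4 : (∑ i ∈ Iᶜ, c i * hCoord (q i)) <
        hCoord p - ∑ i ∈ I, c i * hCoord (q i) :=
      (mul_lt_mul_iff_right₀ (inv_pos.mpr hγpos)).mp hineq
    have h5 : ∑ i, c i * hCoord (q i) < hCoord p := by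
      have := Finset.sum_add_sum_compl I (fun i => c i * hCoord (q i))
      linarith [this]
    have h6 := hcup.2 p q c hpmem hqmem' hqinj hpne hcIoo hcsum hcomb
    linarith
  · -- convex cap case
    intro hcap hpB x hxK
    by_contra hxB
    have hxA : x ∈ A := (hKP hxK).resolve_right hxB
    obtain ⟨i0, hi0⟩ := hqsurj x hxK
    set I : Finset (Fin d) := Finset.univ.filter (fun i => q i ∈ B) with hIdef
    have hIc : ∀ i ∈ Iᶜ, q i ∈ A := by
      intro i hi
      have hmem : q i ∈ A ∪ B := hKP (hqK i)
      have : q i ∉ B := by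
        intro hB
        simp only [hIdef, Finset.mem_compl, Finset.mem_filter, Finset.mem_univ,
          true_and] at hi
        exact hi hB
      exact hmem.resolve_right this
    have hi0c : i0 ∈ Iᶜ := by
      simp only [hIdef, Finset.mem_compl, Finset.mem_filter, Finset.mem_univ, true_and]
      rw [hi0]; exact hxB
    set γ : ℝ := ∑ i ∈ Iᶜ, c i with hγdef
    have hγpos : 0 < γ :=
      Finset.sum_pos (fun i _ => (hcIoo i).1) ⟨i0, hi0c⟩
    obtain ⟨s, t, hsS, htT, hst, hhs, hht⟩ :=
      key_pair p q c I γ hγdef hγpos hcsum hcomb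
    have hTsub : ((insert p (I.image q) : Finset (EuclideanSpace ℝ (Fin d))) :
        Set (EuclideanSpace ℝ (Fin d))) ⊆ B := by
      intro y hy
      simp only [Finset.coe_insert, Set.mem_insert_iff, Finset.coe_image,
        Set.mem_image, Finset.mem_coe] at hy
      rcases hy with rfl | ⟨i, hi, rfl⟩
      · exact hpB
      · simp only [hIdef, Finset.mem_filter] at hi; exact hi.2
    have hSsub : ((Iᶜ.image q : Finset (EuclideanSpace ℝ (Fin d))) :
        Set (EuclideanSpace ℝ (Fin d))) ⊆ A := by
      intro y hy
      simp only [Finset.coe_image, Set.mem_image, Finset.mem_coe] at hy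
      obtain ⟨i, hi, rfl⟩ := hy
      exact hIc i hi
    have hpnotimg : p ∉ I.image q := by
      intro h
      obtain ⟨i, _, hi⟩ := Finset.mem_image.mp h
      exact hpK (hi ▸ hqK i)
    have hcards : (Iᶜ.image q).card + (insert p (I.image q)).card = d + 1 := by
      rw [Finset.card_insert_of_notMem hpnotimg,
        Finset.card_image_of_injective _ hqinj, Finset.card_image_of_injective _ hqinj]
      have := Finset.card_add_card_compl I
      rw [Fintype.card_fin] at this
      omega
    have hineq := hhigh (Iᶜ.image q) (insert p (I.image q)) hSsub hTsub
      ⟨q i0, Finset.mem_image_of_mem q hi0c⟩ ⟨p, Finset.mem_insert_self p _⟩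
      hcards t s htT hsS hst.symm
    -- hineq : hCoord s < hCoord t
    rw [hhs, hht] at hineq
    have h4 : hCoord p - ∑ i ∈ I, c i * hCoord (q i) <
        ∑ i ∈ Iᶜ, c i * hCoord (q i) :=
      (mul_lt_mul_iff_right₀ (inv_pos.mpr hγpos)).mp hineq
    have h5 : hCoord p < ∑ i, c i * hCoord (q i) := by
      have := Finset.sum_add_sum_compl I (fun i => c i * hCoord (q i))
      linarith [this]
    have h6 := hcap.2 p q c hpmem hqmem' hqinj hpne hcIoo hcsum hcomb
    linarith
end
end

section
/- Let A, B ⊂ ℝ^d be disjoint finite sets such that A is high above B. If P ⊆ A ∪ B is a convex cup or a convex cap, then either P \ ∂_π P ⊆ A or P \ ∂_π P ⊆ B. -/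
open scoped BigOperators ENNReal

noncomputable section

open Finset Module

-- helpers
section Helpers
variable {d : ℕ}
local notation "E" => EuclideanSpace ℝ (Fin d)
local notation "F" => EuclideanSpace ℝ (Fin (d-1))

theorem proj_add (x y : E) : proj (x + y) = proj x + proj y := by ext i; simp [proj]
theorem proj_smul (c : ℝ) (x : E) : proj (c • x) = c • proj x := by ext i; simp [proj]
theorem proj_sub (x y : E) : proj (x - y) = proj x - proj y := by ext i; simp [proj]
theorem proj_sum {ι : Type*} (s : Finset ι) (f : ι → E) :
    proj (∑ i ∈ s, f i) = ∑ i ∈ s, proj (f i) := by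
  induction s using Finset.cons_induction with
  | empty => ext i; simp [proj]
  | cons a s ha ih => rw [Finset.sum_cons, Finset.sum_cons, proj_add, ih]

theorem hCoord_apply (hd0 : 0 < d) (x : E) : hCoord x = x ⟨d-1, by omega⟩ := dif_pos hd0
theorem hCoord_smul (hd0 : 0 < d) (c : ℝ) (x : E) : hCoord (c • x) = c * hCoord x := by
  rw [hCoord_apply hd0, hCoord_apply hd0]; rfl
theorem hCoord_sub (hd0 : 0 < d) (x y : E) : hCoord (x - y) = hCoord x - hCoord y := by
  rw [hCoord_apply hd0, hCoord_apply hd0, hCoord_apply hd0]; rfl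
theorem hCoord_sum (hd0 : 0 < d) {ι : Type*} (s : Finset ι) (f : ι → E) :
    hCoord (∑ i ∈ s, f i) = ∑ i ∈ s, hCoord (f i) := by
  induction s using Finset.cons_induction with
  | empty => rw [Finset.sum_empty, Finset.sum_empty, hCoord_apply hd0]; rfl
  | cons a s ha ih =>
      have hadd : ∀ x y : EuclideanSpace ℝ (Fin d), hCoord (x + y) = hCoord x + hCoord y := by
        intro x y; rw [hCoord_apply hd0, hCoord_apply hd0, hCoord_apply hd0]; rfl
      rw [Finset.sum_cons, Finset.sum_cons, hadd, ih]

theorem proj_injOn (hd : 2 ≤ d) {P : Set E} (hreg : Regular P) : Set.InjOn proj P := by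
  intro x hx y hy h
  apply hreg.1 ⟨0, by omega⟩ hx hy
  have := congrArg (fun v => v (⟨0, by omega⟩ : Fin (d-1))) h
  exact this
end Helpers
theorem mem_affineSpan_image {V : Type*} [AddCommGroup V] [Module ℝ V] {ι : Type*}
    (s : Finset ι) (p : ι → V) (w : ι → ℝ) (hw : ∑ i ∈ s, w i = 1) :
    (∑ i ∈ s, w i • p i) ∈ affineSpan ℝ (p '' (s : Set ι)) := by
  classical
  have h1 : ∑ i : s, w i = 1 := by rw [Finset.sum_coe_sort]; exact hw
  have := affineCombination_mem_affineSpan (k := ℝ) (s := (Finset.univ : Finset s))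
    (w := fun i : s => w i) h1 (fun i : s => p i)
  rw [Finset.affineCombination_eq_linear_combination _ _ _ h1] at this
  have hr : Set.range (fun i : s => p i) = p '' (s : Set ι) := by
    ext y
    simp only [Set.mem_range, Set.mem_image, Finset.mem_coe, Subtype.exists, exists_prop]
  rw [hr] at this
  convert this using 1
  rw [← Finset.sum_coe_sort s (fun i => w i • p i)]

theorem marked_carath {V : Type*} [AddCommGroup V] [Module ℝ V] [FiniteDimensional ℝ V]
    (x r : V) :
    ∀ (Q : Finset V) (w : V → ℝ), r ∈ Q → (∀ f ∈ Q, 0 ≤ w f) → 0 < w r →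
    ∑ f ∈ Q, w f = 1 → ∑ f ∈ Q, w f • f = x →
    ∃ (t : Finset V) (v : V → ℝ), t ⊆ Q ∧ r ∈ t ∧ t.card ≤ finrank ℝ V + 1 ∧
      (∀ f ∈ t, 0 < v f) ∧ ∑ f ∈ t, v f = 1 ∧ ∑ f ∈ t, v f • f = x := by
  classical
  intro Q
  induction Q using Finset.strongInduction with
  | _ Q ih =>
    intro w hr hw0 hwr hw1 hwx
    set t₀ : Finset V := Q.filter (fun f => 0 < w f) with ht₀
    have ht₀Q : t₀ ⊆ Q := Finset.filter_subset _ _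
    have hrt₀ : r ∈ t₀ := Finset.mem_filter.2 ⟨hr, hwr⟩
    have hwpos : ∀ f ∈ t₀, 0 < w f := fun f hf => (Finset.mem_filter.1 hf).2
    have hvanish : ∀ f ∈ Q, f ∉ t₀ → w f = 0 := by
      intro f hf hnf
      have : ¬ 0 < w f := fun h => hnf (Finset.mem_filter.2 ⟨hf, h⟩)
      linarith [hw0 f hf]
    have hsum1 : ∑ f ∈ t₀, w f = 1 := by
      rw [← hw1]; exact (Finset.sum_subset ht₀Q (fun f hf hnf => hvanish f hf hnf)).symm ▸ rfl
    have hsumx : ∑ f ∈ t₀, w f • f = x := by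
      rw [← hwx]
      exact Finset.sum_subset ht₀Q (fun f hf hnf => by rw [hvanish f hf hnf, zero_smul])
    by_cases hcard : t₀.card ≤ finrank ℝ V + 1
    · exact ⟨t₀, w, ht₀Q, hrt₀, hcard, hwpos, hsum1, hsumx⟩
    · -- affinely dependent
      have hni : ¬ AffineIndependent ℝ ((↑) : t₀ → V) := by
        intro hai
        have h1 := hai.card_le_finrank_succ
        rw [Fintype.card_coe] at h1
        have h2 : finrank ℝ (vectorSpan ℝ (Set.range ((↑) : t₀ → V))) ≤ finrank ℝ V :=
          Submodule.finrank_le _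
        omega
      obtain ⟨g, hgsmul, hgsum, f₁, hf₁, hf₁ne⟩ :=
        exists_nontrivial_relation_sum_zero_of_not_affine_ind hni
      set a : V → ℝ := fun f => if 0 < g r then -g f else g f with ha
      have hasmul : ∑ f ∈ t₀, a f • f = 0 := by
        by_cases h : 0 < g r <;> simp only [ha, if_pos, if_neg, h, if_true, if_false,
          neg_smul, Finset.sum_neg_distrib, hgsmul, neg_zero]
      have hasum : ∑ f ∈ t₀, a f = 0 := by
        by_cases h : 0 < g r <;> simp only [ha, h, if_true, if_false,
          Finset.sum_neg_distrib, hgsum, neg_zero]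
      have har : a r ≤ 0 := by
        by_cases h : 0 < g r <;> simp only [ha, h, if_true, if_false] <;> linarith
      have haf₁ : a f₁ ≠ 0 := by
        by_cases h : 0 < g r <;> simp only [ha, h, if_true, if_false, neg_ne_zero] <;> exact hf₁ne
      have hpos : ∃ f ∈ t₀, 0 < a f := by
        by_contra hcon
        push_neg at hcon
        have hall : ∀ f ∈ t₀, a f = 0 := by
          intro f hf
          have h1 : ∑ f ∈ t₀, (-a) f = 0 := by simp [hasum]
          have := (Finset.sum_eq_zero_iff_of_nonneg (fun f hf => by
            simp only [Pi.neg_apply]; linarith [hcon f hf])).1 h1 f hf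
          simpa using this
        exact haf₁ (hall f₁ hf₁)
      set Tp : Finset V := t₀.filter (fun f => 0 < a f) with hTp
      have hTpne : Tp.Nonempty := by
        obtain ⟨f, hf, hfa⟩ := hpos; exact ⟨f, Finset.mem_filter.2 ⟨hf, hfa⟩⟩
      obtain ⟨g₀, hg₀, hmin⟩ := Tp.exists_min_image (fun f => w f / a f) hTpne
      have hg₀t₀ : g₀ ∈ t₀ := (Finset.mem_filter.1 hg₀).1
      have hg₀a : 0 < a g₀ := (Finset.mem_filter.1 hg₀).2
      set τ : ℝ := w g₀ / a g₀ with hτ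
      have hτ0 : 0 ≤ τ := div_nonneg (le_of_lt (hwpos g₀ hg₀t₀)) (le_of_lt hg₀a)
      set v : V → ℝ := fun f => w f - τ * a f with hv
      have hv0 : ∀ f ∈ t₀, 0 ≤ v f := by
        intro f hf
        by_cases hfa : 0 < a f
        · have := hmin f (Finset.mem_filter.2 ⟨hf, hfa⟩)
          have : τ * a f ≤ w f := by
            rw [div_le_div_iff₀ hg₀a hfa] at this
            calc τ * a f = w g₀ / a g₀ * a f := rfl
              _ ≤ w f := by rw [div_mul_eq_mul_div, div_le_iff₀ hg₀a]; linarith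
          simp only [hv]; linarith
        · push_neg at hfa
          have : τ * a f ≤ 0 := mul_nonpos_of_nonneg_of_nonpos hτ0 hfa
          have := hwpos f hf
          simp only [hv]; linarith
      have hvg₀ : v g₀ = 0 := by
        simp only [hv, hτ]
        field_simp
        ring
      have hvr : 0 < v r := by
        have : τ * a r ≤ 0 := mul_nonpos_of_nonneg_of_nonpos hτ0 har
        have := hwpos r hrt₀
        simp only [hv]; linarith
      have hvsum : ∑ f ∈ t₀, v f = 1 := by
        simp only [hv, Finset.sum_sub_distrib, ← Finset.mul_sum, hasum, hsum1, mul_zero, sub_zero]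
      have hvsmul : ∑ f ∈ t₀, v f • f = x := by
        simp only [hv, sub_smul, Finset.sum_sub_distrib, hsumx, mul_smul, ← Finset.smul_sum,
          hasmul, smul_zero, sub_zero]
      have hrg₀ : r ≠ g₀ := by rintro rfl; linarith
      have hsub : t₀.erase g₀ ⊂ Q :=
        Finset.ssubset_iff_of_subset ((Finset.erase_subset _ _).trans ht₀Q) |>.2
          ⟨g₀, ht₀Q hg₀t₀, fun h => (Finset.mem_erase.1 h).1 rfl⟩
      have hes : ∑ f ∈ t₀.erase g₀, v f = 1 := by
        have := Finset.add_sum_erase t₀ v hg₀t₀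
        rw [hvg₀, zero_add] at this; rw [this, hvsum]
      have hex : ∑ f ∈ t₀.erase g₀, v f • f = x := by
        have h := Finset.add_sum_erase t₀ (fun f => v f • f) hg₀t₀
        simp only [hvg₀, zero_smul, zero_add] at h; rw [h, hvsmul]
      obtain ⟨t, v', h1, h2, h3, h4, h5, h6⟩ := ih (t₀.erase g₀) hsub v
        (Finset.mem_erase.2 ⟨hrg₀, hrt₀⟩)
        (fun f hf => hv0 f (Finset.mem_of_mem_erase hf)) hvr hes hex
      exact ⟨t, v', h1.trans (hsub.subset), h2, h3, h4, h5, h6⟩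
theorem support_simplex {d : ℕ} (hd : 2 ≤ d) (P : Set (EuclideanSpace ℝ (Fin d)))
    (hPfin : P.Finite) (hinj : Set.InjOn proj P) (hgen : AffGenPos (proj '' P))
    (p r : EuclideanSpace ℝ (Fin d)) (hp : p ∈ P) (hr : r ∈ P) (hpr : p ≠ r)
    (hint : proj p ∈ interior (convexHull ℝ (proj '' P))) :
    ∃ (q : Fin d → EuclideanSpace ℝ (Fin d)) (c : Fin d → ℝ),
      (∀ i, q i ∈ P) ∧ Function.Injective q ∧ (∀ i, p ≠ q i) ∧ (∃ i, q i = r) ∧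
      (∀ i, c i ∈ Set.Ioo (0:ℝ) 1) ∧ ∑ i, c i = 1 ∧ proj p = ∑ i, c i • proj (q i) := by
  classical
  have hfr : finrank ℝ (EuclideanSpace ℝ (Fin (d-1))) = d - 1 := finrank_euclideanSpace_fin
  set QP : Finset (EuclideanSpace ℝ (Fin (d-1))) := (hPfin.image proj).toFinset with hQPdef
  have hQP : (QP : Set (EuclideanSpace ℝ (Fin (d-1)))) = proj '' P := Set.Finite.coe_toFinset _
  have hpQP : proj p ∈ QP := by rw [← Finset.mem_coe, hQP]; exact ⟨p, hp, rfl⟩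
  have hrQP : proj r ∈ QP := by rw [← Finset.mem_coe, hQP]; exact ⟨r, hr, rfl⟩
  have hne : proj p ≠ proj r := fun h => hpr (hinj hp hr h)
  -- find z beyond p in direction away from r, inside hull
  obtain ⟨δ, hδ0, hball⟩ := Metric.isOpen_iff.1 isOpen_interior (proj p) hint
  set v := proj p - proj r with hvdef
  have hv : v ≠ 0 := sub_ne_zero.2 hne
  have hnv : 0 < ‖v‖ := norm_pos_iff.2 hv
  set ε : ℝ := δ / (2 * ‖v‖) with hεdef
  have hε0 : 0 < ε := div_pos hδ0 (by positivity)
  set z := proj p + ε • v with hzdef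
  have hz : z ∈ convexHull ℝ (proj '' P) := by
    have : dist z (proj p) = ε * ‖v‖ := by
      rw [dist_eq_norm]; simp [hzdef, norm_smul, abs_of_pos hε0]
    have hlt : dist z (proj p) < δ := by
      rw [this, hεdef]; rw [div_mul_eq_mul_div]
      rw [div_lt_iff₀ (by positivity)]
      nlinarith
    exact interior_subset (hball (Metric.mem_ball.2 hlt))
  rw [← hQP, Finset.convexHull_eq] at hz
  obtain ⟨u, hu0, hu1, hucm⟩ := hz
  rw [Finset.centerMass_eq_of_sum_1 _ _ hu1] at hucm
  simp only [id] at hucm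
  have h1ε : (0:ℝ) < 1 + ε := by linarith
  -- initial weights
  set w₀ : EuclideanSpace ℝ (Fin (d-1)) → ℝ :=
    fun f => (1/(1+ε)) * u f + (ε/(1+ε)) * (if f = proj r then 1 else 0) with hw₀def
  have hw₀0 : ∀ f ∈ QP, 0 ≤ w₀ f := by
    intro f hf
    have := hu0 f hf
    have h2 : (0:ℝ) ≤ if f = proj r then 1 else 0 := by split <;> norm_num
    have e1 : (0:ℝ) ≤ 1/(1+ε) := by positivity
    have e2 : (0:ℝ) ≤ ε/(1+ε) := by positivity
    simp only [hw₀def]; nlinarith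
  have hw₀sum : ∑ f ∈ QP, w₀ f = 1 := by
    simp only [hw₀def, Finset.sum_add_distrib, ← Finset.mul_sum, hu1,
      Finset.sum_ite_eq' QP (proj r), hrQP, if_pos, mul_one]
    field_simp
  have hw₀smul : ∑ f ∈ QP, w₀ f • f = proj p := by
    have hsplit : ∑ f ∈ QP, w₀ f • f
        = (1/(1+ε)) • ∑ f ∈ QP, u f • f + (ε/(1+ε)) • proj r := by
      have hterm : ∀ f, w₀ f • f
          = (1/(1+ε)) • (u f • f) + (if f = proj r then (ε/(1+ε)) • f else 0) := by
        intro f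
        simp only [hw₀def, add_smul, mul_smul]
        congr 1
        split <;> simp
      rw [Finset.sum_congr rfl (fun f _ => hterm f), Finset.sum_add_distrib, ← Finset.smul_sum]
      congr 1
      rw [Finset.sum_ite_eq' QP (proj r) (fun f => (ε/(1+ε)) • f), if_pos hrQP]
    rw [hsplit, hucm, hzdef, hvdef]
    have hε1 : (1+ε) ≠ 0 := ne_of_gt h1ε
    match_scalars <;> field_simp <;> ring
  have hw₀r : 0 < w₀ (proj r) := by
    have := hu0 _ hrQP
    have e2 : (0:ℝ) < ε/(1+ε) := by positivity
    have e1 : (0:ℝ) ≤ 1/(1+ε) := by positivity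
    have heq : w₀ (proj r) = 1/(1+ε) * u (proj r) + ε/(1+ε) := by
      simp [hw₀def]
    rw [heq]; nlinarith
  -- remove proj p
  set θ : ℝ := w₀ (proj p) with hθdef
  have huple : u (proj p) ≤ 1 := by
    rw [← hu1]
    exact Finset.single_le_sum hu0 hpQP
  have hθlt : θ < 1 := by
    have : w₀ (proj p) = (1/(1+ε)) * u (proj p) := by
      simp only [hw₀def, if_neg hne, mul_zero, add_zero]
    rw [hθdef, this]
    have h2 : (1/(1+ε)) * u (proj p) ≤ 1/(1+ε) * 1 := by
      apply mul_le_mul_of_nonneg_left huple (by positivity)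
    have h3 : 1/(1+ε) < 1 := by rw [div_lt_one h1ε]; linarith
    linarith
  have hθ0 : 0 ≤ θ := hw₀0 _ hpQP
  have h1θ : (0:ℝ) < 1 - θ := by linarith
  set Q : Finset (EuclideanSpace ℝ (Fin (d-1))) := QP.erase (proj p) with hQdef
  set w : EuclideanSpace ℝ (Fin (d-1)) → ℝ := fun f => w₀ f / (1 - θ) with hwdef
  have hrQ : proj r ∈ Q := Finset.mem_erase.2 ⟨hne.symm, hrQP⟩
  have hQsum₀ : ∑ f ∈ Q, w₀ f = 1 - θ := by
    have := Finset.add_sum_erase QP w₀ hpQP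
    rw [← hθdef] at this
    rw [hQdef]; linarith [this.symm ▸ hw₀sum]
  have hQsum : ∑ f ∈ Q, w f = 1 := by
    simp only [hwdef, ← Finset.sum_div, hQsum₀]
    field_simp
  have hQsmul : ∑ f ∈ Q, w f • f = proj p := by
    have h := Finset.add_sum_erase QP (fun f => w₀ f • f) hpQP
    have h0 : ∑ f ∈ Q, w₀ f • f = (1-θ) • proj p := by
      have h1 : ∑ f ∈ Q, w₀ f • f = (∑ f ∈ QP, w₀ f • f) - w₀ (proj p) • proj p :=
        eq_sub_of_add_eq' h
      rw [h1, hw₀smul, sub_smul, one_smul]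
    have h2 : ∑ f ∈ Q, w f • f = (1-θ)⁻¹ • ∑ f ∈ Q, w₀ f • f := by
      rw [Finset.smul_sum]
      apply Finset.sum_congr rfl
      intro f hf
      rw [smul_smul, hwdef]
      congr 1
      field_simp
    rw [h2, h0, smul_smul, inv_mul_cancel₀ (ne_of_gt h1θ), one_smul]
  have hw0 : ∀ f ∈ Q, 0 ≤ w f := fun f hf =>
    div_nonneg (hw₀0 f (Finset.mem_of_mem_erase hf)) (le_of_lt h1θ)
  have hwr : 0 < w (proj r) := div_pos hw₀r h1θ
  -- marked caratheodory
  obtain ⟨t, vv, htQ, hrt, htcard_le, hvpos, hvsum, hvsmul⟩ :=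
    marked_carath (proj p) (proj r) Q w hrQ hw0 hwr hQsum hQsmul
  rw [hfr] at htcard_le
  have hpt : proj p ∉ t := fun h => (Finset.mem_erase.1 (htQ h)).1 rfl
  -- QP has at least d elements
  have hspan : affineSpan ℝ (proj '' P) = ⊤ :=
    affineSpan_eq_top_of_nonempty_interior ⟨proj p, hint⟩
  have hQPcard : d ≤ QP.card := by
    by_contra hcon
    push_neg at hcon
    have hQPne : QP.Nonempty := ⟨_, hpQP⟩
    have hc1 : 1 ≤ QP.card := Finset.card_pos.2 hQPne
    have hcc : QP.card = (QP.card - 1) + 1 := by omega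
    have hle := finrank_vectorSpan_image_finset_le ℝ (id : EuclideanSpace ℝ (Fin (d-1)) → EuclideanSpace ℝ (Fin (d-1))) QP hcc
    rw [Finset.image_id] at hle
    have hvs : vectorSpan ℝ (QP : Set (EuclideanSpace ℝ (Fin (d-1)))) = ⊤ := by
      rw [hQP, ← direction_affineSpan, hspan, AffineSubspace.direction_top]
    rw [hvs, finrank_top, hfr] at hle
    omega
  -- t has exactly d elements
  have htcard : t.card = d := by
    rcases Nat.lt_or_ge t.card d with hlt | hge
    · exfalso
      set u' : Finset (EuclideanSpace ℝ (Fin (d-1))) := insert (proj p) t with hu'def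
      have hu'QP : u' ⊆ QP := by
        intro f hf
        rcases Finset.mem_insert.1 hf with h | h
        · rwa [h]
        · exact Finset.mem_of_mem_erase (htQ h)
      have hu'card : u'.card = t.card + 1 := Finset.card_insert_of_notMem hpt
      obtain ⟨u'', hu'u'', hu''QP, hu''card⟩ :=
        Finset.exists_subsuperset_card_eq (n := d) hu'QP (by omega) (by omega)
      have hu''c : u''.card = d := by omega
      have hai := hgen u''
        (fun f hf => by rw [← hQP]; exact Finset.mem_coe.2 (hu''QP (Finset.mem_coe.1 hf)))
        (by omega)
      set g : EuclideanSpace ℝ (Fin (d-1)) → ℝ :=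
        fun f => (if f ∈ t then vv f else 0) - (if f = proj p then 1 else 0) with hgdef
      have htu'' : t ⊆ u'' := (Finset.subset_insert _ _).trans hu'u''
      have hpu'' : proj p ∈ u'' := hu'u'' (Finset.mem_insert_self _ _)
      have hgsum : ∑ f ∈ u'', g f = 0 := by
        simp only [hgdef, Finset.sum_sub_distrib]
        rw [Finset.sum_ite_eq' u'' (proj p) (fun _ => (1:ℝ)), if_pos hpu'']
        rw [Finset.sum_ite_mem]
        rw [Finset.inter_eq_right.2 htu'', hvsum]
        ring
      have hgsmul : ∑ f ∈ u'', g f • f = 0 := by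
        simp only [hgdef, sub_smul, Finset.sum_sub_distrib, ite_smul, zero_smul, one_smul]
        rw [Finset.sum_ite_eq' u'' (proj p) (fun f => f), if_pos hpu'']
        rw [Finset.sum_ite_mem]
        rw [Finset.inter_eq_right.2 htu'', hvsmul]
        simp
      have := affineIndependent_iff.1 hai Finset.univ (fun i => g i)
      have hz := this (by rw [Finset.sum_coe_sort u'' g]; exact hgsum)
        (by rw [Finset.sum_coe_sort u'' (fun f => g f • f)]; exact hgsmul)
        ⟨proj p, hpu''⟩ (Finset.mem_univ _)
      simp only [hgdef, if_neg hpt, if_pos rfl] at hz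
      norm_num at hz
    · omega
  -- strict upper bounds on coefficients
  have hvlt : ∀ f ∈ t, vv f < 1 := by
    intro f hf
    have hadd := Finset.add_sum_erase t vv hf
    have hne' : (t.erase f).Nonempty := by
      rw [← Finset.card_pos, Finset.card_erase_of_mem hf]
      omega
    have hpos' : 0 < ∑ f' ∈ t.erase f, vv f' :=
      Finset.sum_pos (fun f' hf' => hvpos f' (Finset.mem_of_mem_erase hf')) hne'
    rw [hvsum] at hadd
    linarith
  -- lift back to points of P
  have hpre : ∀ f : {x // x ∈ t}, ∃ qf, qf ∈ P ∧ proj qf = (f:EuclideanSpace ℝ (Fin (d-1))) ∧ qf ≠ p := by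
    rintro ⟨f, hf⟩
    have : f ∈ proj '' P := by rw [← hQP]; exact Finset.mem_of_mem_erase (htQ hf)
    obtain ⟨qf, hqfP, hqfe⟩ := this
    refine ⟨qf, hqfP, hqfe, ?_⟩
    rintro rfl
    exact (Finset.mem_erase.1 (htQ hf)).1 hqfe.symm
  choose qf hqfP hqfproj hqfne using hpre
  have hqfinj : Function.Injective qf := by
    intro f f' h
    apply Subtype.ext
    rw [← hqfproj f, ← hqfproj f', h]
  set e : {x // x ∈ t} ≃ Fin d := t.equivFin.trans (finCongr htcard) with hedef
  refine ⟨fun i => qf (e.symm i), fun i => vv (e.symm i), fun i => hqfP _,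
    fun i j h => ?_, fun i h => hqfne (e.symm i) h.symm, ?_, fun i => ⟨hvpos _ (e.symm i).2, hvlt _ (e.symm i).2⟩, ?_, ?_⟩
  · have := hqfinj h
    have := e.symm.injective this
    exact this
  · refine ⟨e ⟨proj r, hrt⟩, ?_⟩
    show qf (e.symm (e ⟨proj r, hrt⟩)) = r
    have h1 : (e.symm (e ⟨proj r, hrt⟩)) = ⟨proj r, hrt⟩ := Equiv.symm_apply_apply _ _
    rw [h1]
    apply hinj (hqfP _) hr
    rw [hqfproj ⟨proj r, hrt⟩]
  · show ∑ i : Fin d, vv ↑(e.symm i) = 1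
    rw [Equiv.sum_comp e.symm (fun f : {x // x ∈ t} => vv ↑f), Finset.sum_coe_sort t vv, hvsum]
  · have : ∀ i, proj (qf (e.symm i)) = ((e.symm i : {x // x ∈ t}) : EuclideanSpace ℝ (Fin (d-1))) :=
      fun i => hqfproj _
    calc proj p = ∑ f ∈ t, vv f • f := hvsmul.symm
      _ = ∑ f : {x // x ∈ t}, vv f • (f : EuclideanSpace ℝ (Fin (d-1))) :=
          (Finset.sum_coe_sort t (fun f => vv f • f)).symm
      _ = ∑ i, vv (e.symm i) • ((e.symm i : {x // x ∈ t}) : EuclideanSpace ℝ (Fin (d-1))) :=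
          (Equiv.sum_comp e.symm _).symm
      _ = ∑ i, vv (e.symm i) • proj (qf (e.symm i)) := by
          apply Finset.sum_congr rfl; intro i _; rw [this i]
theorem highAbove_upper {d : ℕ} (hd : 2 ≤ d) {A B : Set (EuclideanSpace ℝ (Fin d))}
    (hAB : HighAbove A B)
    (a : EuclideanSpace ℝ (Fin d)) (ha : a ∈ A)
    (q : Fin d → EuclideanSpace ℝ (Fin d)) (c : Fin d → ℝ)
    (hq : ∀ i, q i ∈ A ∪ B) (hqinj : Function.Injective q) (hne : ∀ i, a ≠ q i)
    (hc : ∀ i, c i ∈ Set.Ioo (0:ℝ) 1) (hc1 : ∑ i, c i = 1)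
    (hcomb : proj a = ∑ i, c i • proj (q i)) (hB : ∃ i₀, q i₀ ∈ B) :
    ∑ i, c i * hCoord (q i) < hCoord a := by
  classical
  have hd0 : 0 < d := by omega
  obtain ⟨hdisj, hreg, hthird⟩ := hAB
  obtain ⟨i₀, hi₀⟩ := hB
  set IA : Finset (Fin d) := Finset.univ.filter (fun i => q i ∈ A) with hIAdef
  set IB : Finset (Fin d) := Finset.univ.filter (fun i => q i ∉ A) with hIBdef
  have hIBB : ∀ i ∈ IB, q i ∈ B := fun i hi =>
    (hq i).resolve_left (Finset.mem_filter.1 hi).2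
  have hIAA : ∀ i ∈ IA, q i ∈ A := fun i hi => (Finset.mem_filter.1 hi).2
  have hi₀IB : i₀ ∈ IB := Finset.mem_filter.2 ⟨Finset.mem_univ _,
    fun h => Set.disjoint_left.1 hdisj h hi₀⟩
  set δ : ℝ := ∑ i ∈ IB, c i with hδdef
  set γ : ℝ := ∑ i ∈ IA, c i with hγdef
  have hsplit : ∀ g : Fin d → ℝ, ∑ i, g i = ∑ i ∈ IA, g i + ∑ i ∈ IB, g i := by
    intro g
    rw [hIAdef, hIBdef, Finset.sum_filter_add_sum_filter_not]
  have hsplitV : ∀ g : Fin d → EuclideanSpace ℝ (Fin (d-1)),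
      ∑ i, g i = ∑ i ∈ IA, g i + ∑ i ∈ IB, g i := by
    intro g
    rw [hIAdef, hIBdef, Finset.sum_filter_add_sum_filter_not]
  have hδ0 : 0 < δ := by
    calc (0:ℝ) < c i₀ := (hc i₀).1
      _ ≤ δ := Finset.single_le_sum (fun i _ => le_of_lt (hc i).1) hi₀IB
  have hγδ : γ + δ = 1 := by rw [hγdef, hδdef, ← hsplit c, hc1]
  set S : Finset (EuclideanSpace ℝ (Fin d)) := insert a (IA.image q) with hSdef
  set T : Finset (EuclideanSpace ℝ (Fin d)) := IB.image q with hTdef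
  have hSA : (S : Set (EuclideanSpace ℝ (Fin d))) ⊆ A := by
    intro x hx
    simp only [hSdef, Finset.coe_insert, Set.mem_insert_iff, Finset.coe_image,
      Set.mem_image, Finset.mem_coe] at hx
    rcases hx with rfl | ⟨i, hi, rfl⟩
    · exact ha
    · exact hIAA i hi
  have hTB : (T : Set (EuclideanSpace ℝ (Fin d))) ⊆ B := by
    intro x hx
    simp only [hTdef, Finset.coe_image, Set.mem_image, Finset.mem_coe] at hx
    obtain ⟨i, hi, rfl⟩ := hx
    exact hIBB i hi
  have haim : a ∉ IA.image q := by
    intro h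
    obtain ⟨i, _, hie⟩ := Finset.mem_image.1 h
    exact hne i hie.symm
  have hcards : S.card + T.card = d + 1 := by
    rw [hSdef, hTdef, Finset.card_insert_of_notMem haim,
      Finset.card_image_of_injective _ hqinj, Finset.card_image_of_injective _ hqinj]
    have hcc := Finset.card_filter_add_card_filter_not
      (s := (Finset.univ : Finset (Fin d))) (p := fun i => q i ∈ A)
    simp only [Finset.card_univ, Fintype.card_fin] at hcc
    have e1 : (Finset.univ.filter (fun i => q i ∈ A)).card = IA.card := rfl
    have e2 : (Finset.univ.filter (fun a => q a ∉ A)).card = IB.card := rfl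
    rw [e1, e2] at hcc
    omega
  set s : EuclideanSpace ℝ (Fin d) := δ⁻¹ • (a - ∑ i ∈ IA, c i • q i) with hsdef
  set t : EuclideanSpace ℝ (Fin d) := δ⁻¹ • ∑ i ∈ IB, c i • q i with htdef
  have hsS : s ∈ affineSpan ℝ (S : Set (EuclideanSpace ℝ (Fin d))) := by
    set p' : Option (Fin d) → EuclideanSpace ℝ (Fin d) := fun o => o.elim a q with hp'def
    set w' : Option (Fin d) → ℝ := fun o => o.elim δ⁻¹ (fun i => -(δ⁻¹ * c i)) with hw'def
    set s' : Finset (Option (Fin d)) := insert none (IA.image some) with hs'def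
    have hnm : none ∉ IA.image some := by simp
    have hsomeinj : Function.Injective (some : Fin d → Option (Fin d)) := fun _ _ h =>
      Option.some.inj h
    have hw'sum : ∑ o ∈ s', w' o = 1 := by
      rw [hs'def, Finset.sum_insert hnm, Finset.sum_image (fun x _ y _ h => hsomeinj h)]
      simp only [hw'def, Option.elim]
      rw [Finset.sum_neg_distrib, ← Finset.mul_sum, ← hγdef]
      field_simp
      linarith
    have hmem := mem_affineSpan_image s' p' w' hw'sum
    have himg : p' '' (s' : Set (Option (Fin d))) = (S : Set (EuclideanSpace ℝ (Fin d))) := by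
      rw [hs'def, hSdef]
      simp only [Finset.coe_insert, Set.image_insert_eq, Finset.coe_image, Set.image_image,
        Finset.coe_insert, Finset.coe_image]
      rfl
    rw [himg] at hmem
    have heq : ∑ o ∈ s', w' o • p' o = s := by
      rw [hs'def, Finset.sum_insert hnm, Finset.sum_image (fun x _ y _ h => hsomeinj h)]
      simp only [hw'def, hp'def, Option.elim]
      rw [hsdef, smul_sub, Finset.smul_sum]
      rw [sub_eq_add_neg, ← Finset.sum_neg_distrib]
      congr 1
      apply Finset.sum_congr rfl
      intro i _
      rw [neg_smul, mul_smul]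
    rwa [heq] at hmem
  have htT : t ∈ affineSpan ℝ (T : Set (EuclideanSpace ℝ (Fin d))) := by
    have hwsum : ∑ i ∈ IB, δ⁻¹ * c i = 1 := by
      rw [← Finset.mul_sum, ← hδdef]
      field_simp
    have hmem := mem_affineSpan_image IB q (fun i => δ⁻¹ * c i) hwsum
    have himg : q '' (IB : Set (Fin d)) = (T : Set (EuclideanSpace ℝ (Fin d))) := by
      rw [hTdef, Finset.coe_image]
    rw [himg] at hmem
    have heq : ∑ i ∈ IB, (δ⁻¹ * c i) • q i = t := by
      rw [htdef, Finset.smul_sum]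
      apply Finset.sum_congr rfl
      intro i _
      rw [mul_smul]
    rwa [heq] at hmem
  have hprojq : ∀ (co : ℝ) (x : EuclideanSpace ℝ (Fin d)), proj (co • x) = co • proj x :=
    fun co x => proj_smul co x
  have hps : proj s = δ⁻¹ • (proj a - ∑ i ∈ IA, c i • proj (q i)) := by
    rw [hsdef, proj_smul, proj_sub, proj_sum]
    simp only [proj_smul]
  have hpt : proj t = δ⁻¹ • ∑ i ∈ IB, c i • proj (q i) := by
    rw [htdef, proj_smul, proj_sum]
    simp only [proj_smul]
  have hprojst : proj s = proj t := by
    rw [hps, hpt]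
    congr 1
    have := hsplitV (fun i => c i • proj (q i))
    rw [← hcomb] at this
    rw [this]
    abel
  have hST := hthird S T hSA hTB ⟨a, Finset.mem_insert_self _ _⟩
    ⟨q i₀, Finset.mem_image.2 ⟨i₀, hi₀IB, rfl⟩⟩ hcards s t hsS htT hprojst
  -- translate heights
  have hhs : hCoord s = δ⁻¹ * (hCoord a - ∑ i ∈ IA, c i * hCoord (q i)) := by
    rw [hsdef, hCoord_smul hd0, hCoord_sub hd0, hCoord_sum hd0]
    congr 2
    exact Finset.sum_congr rfl (fun i _ => hCoord_smul hd0 _ _)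
  have hht : hCoord t = δ⁻¹ * ∑ i ∈ IB, c i * hCoord (q i) := by
    rw [htdef, hCoord_smul hd0, hCoord_sum hd0]
    congr 1
    exact Finset.sum_congr rfl (fun i _ => hCoord_smul hd0 _ _)
  rw [hhs, hht] at hST
  have hinv : 0 < δ⁻¹ := inv_pos.2 hδ0
  have h1 : ∑ i ∈ IB, c i * hCoord (q i)
      < hCoord a - ∑ i ∈ IA, c i * hCoord (q i) := by
    have := (mul_lt_mul_iff_right₀ hinv).1 hST
    linarith
  have h2 := hsplit (fun i => c i * hCoord (q i))
  rw [h2]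
  linarith
theorem highAbove_lower {d : ℕ} (hd : 2 ≤ d) {A B : Set (EuclideanSpace ℝ (Fin d))}
    (hAB : HighAbove A B)
    (b : EuclideanSpace ℝ (Fin d)) (hb : b ∈ B)
    (q : Fin d → EuclideanSpace ℝ (Fin d)) (c : Fin d → ℝ)
    (hq : ∀ i, q i ∈ A ∪ B) (hqinj : Function.Injective q) (hne : ∀ i, b ≠ q i)
    (hc : ∀ i, c i ∈ Set.Ioo (0:ℝ) 1) (hc1 : ∑ i, c i = 1)
    (hcomb : proj b = ∑ i, c i • proj (q i)) (hA : ∃ i₀, q i₀ ∈ A) :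
    hCoord b < ∑ i, c i * hCoord (q i) := by
  classical
  have hd0 : 0 < d := by omega
  obtain ⟨hdisj, hreg, hthird⟩ := hAB
  obtain ⟨i₀, hi₀⟩ := hA
  set IA : Finset (Fin d) := Finset.univ.filter (fun i => q i ∈ A) with hIAdef
  set IB : Finset (Fin d) := Finset.univ.filter (fun i => q i ∉ A) with hIBdef
  have hIBB : ∀ i ∈ IB, q i ∈ B := fun i hi =>
    (hq i).resolve_left (Finset.mem_filter.1 hi).2
  have hIAA : ∀ i ∈ IA, q i ∈ A := fun i hi => (Finset.mem_filter.1 hi).2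
  have hi₀IA : i₀ ∈ IA := Finset.mem_filter.2 ⟨Finset.mem_univ _, hi₀⟩
  set γ : ℝ := ∑ i ∈ IA, c i with hγdef
  set δ : ℝ := ∑ i ∈ IB, c i with hδdef
  have hsplit : ∀ g : Fin d → ℝ, ∑ i, g i = ∑ i ∈ IA, g i + ∑ i ∈ IB, g i := by
    intro g
    rw [hIAdef, hIBdef, Finset.sum_filter_add_sum_filter_not]
  have hsplitV : ∀ g : Fin d → EuclideanSpace ℝ (Fin (d-1)),
      ∑ i, g i = ∑ i ∈ IA, g i + ∑ i ∈ IB, g i := by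
    intro g
    rw [hIAdef, hIBdef, Finset.sum_filter_add_sum_filter_not]
  have hγ0 : 0 < γ := by
    calc (0:ℝ) < c i₀ := (hc i₀).1
      _ ≤ γ := Finset.single_le_sum (fun i _ => le_of_lt (hc i).1) hi₀IA
  have hγδ : γ + δ = 1 := by rw [hγdef, hδdef, ← hsplit c, hc1]
  set S : Finset (EuclideanSpace ℝ (Fin d)) := IA.image q with hSdef
  set T : Finset (EuclideanSpace ℝ (Fin d)) := insert b (IB.image q) with hTdef
  have hSA : (S : Set (EuclideanSpace ℝ (Fin d))) ⊆ A := by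
    intro x hx
    simp only [hSdef, Finset.coe_image, Set.mem_image, Finset.mem_coe] at hx
    obtain ⟨i, hi, rfl⟩ := hx
    exact hIAA i hi
  have hTB : (T : Set (EuclideanSpace ℝ (Fin d))) ⊆ B := by
    intro x hx
    simp only [hTdef, Finset.coe_insert, Set.mem_insert_iff, Finset.coe_image,
      Set.mem_image, Finset.mem_coe] at hx
    rcases hx with rfl | ⟨i, hi, rfl⟩
    · exact hb
    · exact hIBB i hi
  have hbim : b ∉ IB.image q := by
    intro h
    obtain ⟨i, _, hie⟩ := Finset.mem_image.1 h
    exact hne i hie.symm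
  have hcards : S.card + T.card = d + 1 := by
    rw [hSdef, hTdef, Finset.card_insert_of_notMem hbim,
      Finset.card_image_of_injective _ hqinj, Finset.card_image_of_injective _ hqinj]
    have hcc := Finset.card_filter_add_card_filter_not
      (s := (Finset.univ : Finset (Fin d))) (p := fun i => q i ∈ A)
    simp only [Finset.card_univ, Fintype.card_fin] at hcc
    have e1 : (Finset.univ.filter (fun i => q i ∈ A)).card = IA.card := rfl
    have e2 : (Finset.univ.filter (fun a => q a ∉ A)).card = IB.card := rfl
    rw [e1, e2] at hcc
    omega
  set s : EuclideanSpace ℝ (Fin d) := γ⁻¹ • ∑ i ∈ IA, c i • q i with hsdef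
  set t : EuclideanSpace ℝ (Fin d) := γ⁻¹ • (b - ∑ i ∈ IB, c i • q i) with htdef
  have hsS : s ∈ affineSpan ℝ (S : Set (EuclideanSpace ℝ (Fin d))) := by
    have hwsum : ∑ i ∈ IA, γ⁻¹ * c i = 1 := by
      rw [← Finset.mul_sum, ← hγdef]
      field_simp
    have hmem := mem_affineSpan_image IA q (fun i => γ⁻¹ * c i) hwsum
    have himg : q '' (IA : Set (Fin d)) = (S : Set (EuclideanSpace ℝ (Fin d))) := by
      rw [hSdef, Finset.coe_image]
    rw [himg] at hmem
    have heq : ∑ i ∈ IA, (γ⁻¹ * c i) • q i = s := by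
      rw [hsdef, Finset.smul_sum]
      apply Finset.sum_congr rfl
      intro i _
      rw [mul_smul]
    rwa [heq] at hmem
  have htT : t ∈ affineSpan ℝ (T : Set (EuclideanSpace ℝ (Fin d))) := by
    set p' : Option (Fin d) → EuclideanSpace ℝ (Fin d) := fun o => o.elim b q with hp'def
    set w' : Option (Fin d) → ℝ := fun o => o.elim γ⁻¹ (fun i => -(γ⁻¹ * c i)) with hw'def
    set s' : Finset (Option (Fin d)) := insert none (IB.image some) with hs'def
    have hnm : none ∉ IB.image some := by simp
    have hsomeinj : Function.Injective (some : Fin d → Option (Fin d)) := fun _ _ h =>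
      Option.some.inj h
    have hw'sum : ∑ o ∈ s', w' o = 1 := by
      rw [hs'def, Finset.sum_insert hnm, Finset.sum_image (fun x _ y _ h => hsomeinj h)]
      simp only [hw'def, Option.elim]
      rw [Finset.sum_neg_distrib, ← Finset.mul_sum, ← hδdef]
      field_simp
      linarith
    have hmem := mem_affineSpan_image s' p' w' hw'sum
    have himg : p' '' (s' : Set (Option (Fin d))) = (T : Set (EuclideanSpace ℝ (Fin d))) := by
      rw [hs'def, hTdef]
      simp only [Finset.coe_insert, Set.image_insert_eq, Finset.coe_image, Set.image_image,
        Finset.coe_insert, Finset.coe_image]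
      rfl
    rw [himg] at hmem
    have heq : ∑ o ∈ s', w' o • p' o = t := by
      rw [hs'def, Finset.sum_insert hnm, Finset.sum_image (fun x _ y _ h => hsomeinj h)]
      simp only [hw'def, hp'def, Option.elim]
      rw [htdef, smul_sub, Finset.smul_sum]
      rw [sub_eq_add_neg, ← Finset.sum_neg_distrib]
      congr 1
      apply Finset.sum_congr rfl
      intro i _
      rw [neg_smul, mul_smul]
    rwa [heq] at hmem
  have hps : proj s = γ⁻¹ • ∑ i ∈ IA, c i • proj (q i) := by
    rw [hsdef, proj_smul, proj_sum]
    simp only [proj_smul]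
  have hpt : proj t = γ⁻¹ • (proj b - ∑ i ∈ IB, c i • proj (q i)) := by
    rw [htdef, proj_smul, proj_sub, proj_sum]
    simp only [proj_smul]
  have hprojst : proj s = proj t := by
    rw [hps, hpt]
    congr 1
    have := hsplitV (fun i => c i • proj (q i))
    rw [← hcomb] at this
    rw [this]
    abel
  have hST := hthird S T hSA hTB ⟨q i₀, Finset.mem_image.2 ⟨i₀, hi₀IA, rfl⟩⟩
    ⟨b, Finset.mem_insert_self _ _⟩ hcards s t hsS htT hprojst
  have hhs : hCoord s = γ⁻¹ * ∑ i ∈ IA, c i * hCoord (q i) := by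
    rw [hsdef, hCoord_smul hd0, hCoord_sum hd0]
    congr 1
    exact Finset.sum_congr rfl (fun i _ => hCoord_smul hd0 _ _)
  have hht : hCoord t = γ⁻¹ * (hCoord b - ∑ i ∈ IB, c i * hCoord (q i)) := by
    rw [htdef, hCoord_smul hd0, hCoord_sub hd0, hCoord_sum hd0]
    congr 2
    exact Finset.sum_congr rfl (fun i _ => hCoord_smul hd0 _ _)
  rw [hhs, hht] at hST
  have hinv : 0 < γ⁻¹ := inv_pos.2 hγ0
  have h1 : hCoord b - ∑ i ∈ IB, c i * hCoord (q i)
      < ∑ i ∈ IA, c i * hCoord (q i) := by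
    have := (mul_lt_mul_iff_right₀ hinv).1 hST
    linarith
  have h2 := hsplit (fun i => c i * hCoord (q i))
  rw [h2]
  linarith

theorem stmt8 (d : ℕ) (hd : 2 ≤ d) (A B : Set (EuclideanSpace ℝ (Fin d)))
    (hAfin : A.Finite) (hBfin : B.Finite) (hAB : HighAbove A B)
    (P : Set (EuclideanSpace ℝ (Fin d))) (hP : P ⊆ A ∪ B)
    (hcupcap : ConvexCup P ∨ ConvexCap P) :
    P \ piBoundary P ⊆ A ∨ P \ piBoundary P ⊆ B := by
  classical
  by_contra hcon
  push_neg at hcon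
  obtain ⟨hnA, hnB⟩ := hcon
  obtain ⟨x, hxmem, hxA⟩ := Set.not_subset.1 hnA
  obtain ⟨y, hymem, hyB⟩ := Set.not_subset.1 hnB
  obtain ⟨hxP, hxbd⟩ := hxmem
  obtain ⟨hyP, hybd⟩ := hymem
  have hxB : x ∈ B := (hP hxP).resolve_left hxA
  have hyA : y ∈ A := (hP hyP).resolve_right hyB
  have hintX : proj x ∈ interior (convexHull ℝ (proj '' P)) := by
    by_contra h
    exact hxbd ⟨hxP, h⟩
  have hintY : proj y ∈ interior (convexHull ℝ (proj '' P)) := by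
    by_contra h
    exact hybd ⟨hyP, h⟩
  have hPfin : P.Finite := (hAfin.union hBfin).subset hP
  have hregP : Regular P := by rcases hcupcap with h | h <;> exact h.1
  have hinjP : Set.InjOn proj P := proj_injOn hd hregP
  have hgen : AffGenPos (proj '' P) := hregP.2.1
  have hdisj : Disjoint A B := hAB.1
  have hxy : x ≠ y := by
    rintro rfl
    exact Set.disjoint_left.1 hdisj hyA hxB
  rcases hcupcap with hcup | hcap
  · obtain ⟨q, c, hqP, hqinj, hqne, ⟨i₀, hi₀⟩, hcIoo, hc1, hcomb⟩ :=
      support_simplex hd P hPfin hinjP hgen y x hyP hxP hxy.symm hintY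
    have h1 := hcup.2 y q c hyP hqP hqinj hqne hcIoo hc1 hcomb
    have h2 := highAbove_upper hd hAB y hyA q c (fun i => hP (hqP i)) hqinj hqne hcIoo hc1
      hcomb ⟨i₀, by rw [hi₀]; exact hxB⟩
    linarith
  · obtain ⟨q, c, hqP, hqinj, hqne, ⟨i₀, hi₀⟩, hcIoo, hc1, hcomb⟩ :=
      support_simplex hd P hPfin hinjP hgen x y hxP hyP hxy hintX
    have h1 := hcap.2 x q c hxP hqP hqinj hqne hcIoo hc1 hcomb
    have h2 := highAbove_lower hd hAB x hxB q c (fun i => hP (hqP i)) hqinj hqne hcIoo hc1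
      hcomb ⟨i₀, by rw [hi₀]; exact hyA⟩
    linarith
end
end

section
/- Let P = {p_1, …, p_m} ⊂ ℝ^d be a d-oscillator, sorted by increasing first coordinate. Then for any integers a, b with 1 ≤ a ≤ b ≤ m, the consecutive section P_{[a,b]} = {p_a, p_{a+1}, …, p_b} is a d-oscillator. -/
open scoped BigOperators ENNReal

noncomputable section

section AuxOsc

variable {d : ℕ} {P : Set (EuclideanSpace ℝ (Fin d))}

private lemma sepFinite (hfin : P.Finite) (φ : EuclideanSpace ℝ (Fin d) → Prop) :
    {q ∈ P | φ q}.Finite := hfin.subset (fun q hq => hq.1)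

private lemma rank_le_ncard (hfin : P.Finite) (p : EuclideanSpace ℝ (Fin d)) :
    rank P p ≤ P.ncard := Set.ncard_le_ncard (fun q hq => hq.1) hfin

private lemma one_le_rank (hfin : P.Finite) {p : EuclideanSpace ℝ (Fin d)} (hp : p ∈ P) :
    1 ≤ rank P p := by
  have h : ({q ∈ P | firstCoord q ≤ firstCoord p}).Nonempty := ⟨p, hp, le_refl _⟩
  have := (Set.ncard_pos (sepFinite hfin _)).mpr h
  exact this

private lemma rank_mono (hfin : P.Finite) {p q : EuclideanSpace ℝ (Fin d)}
    (h : firstCoord q ≤ firstCoord p) : rank P q ≤ rank P p :=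
  Set.ncard_le_ncard (fun r hr => ⟨hr.1, le_trans hr.2 h⟩) (sepFinite hfin _)

private lemma rank_strict (hfin : P.Finite) {p q : EuclideanSpace ℝ (Fin d)}
    (hp : p ∈ P) (h : firstCoord q < firstCoord p) : rank P q < rank P p := by
  have hsub : {r ∈ P | firstCoord r ≤ firstCoord q} ⊆ {r ∈ P | firstCoord r ≤ firstCoord p} :=
    fun r hr => ⟨hr.1, hr.2.trans h.le⟩
  refine Set.ncard_lt_ncard ?_ (sepFinite hfin _)
  rw [Set.ssubset_iff_of_subset hsub]
  exact ⟨p, ⟨hp, le_refl _⟩, fun hmem => absurd hmem.2 (not_le.mpr h)⟩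

private lemma fc_le_iff (hfin : P.Finite) {p q : EuclideanSpace ℝ (Fin d)}
    (hp : p ∈ P) (hq : q ∈ P) :
    firstCoord q ≤ firstCoord p ↔ rank P q ≤ rank P p := by
  constructor
  · exact rank_mono hfin
  · intro h
    by_contra hc
    exact absurd (rank_strict hfin hq (not_le.mp hc)) (not_lt.mpr h)

private lemma rank_injOn (hfin : P.Finite) (hinj : Set.InjOn firstCoord P) :
    Set.InjOn (rank P) P := by
  intro p hp q hq h
  rcases lt_trichotomy (firstCoord p) (firstCoord q) with hlt | heq | hgt
  · exact absurd (rank_strict hfin hq hlt) (by omega)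
  · exact hinj hp hq heq
  · exact absurd (rank_strict hfin hp hgt) (by omega)

private lemma ncard_Icc_nat (a b : ℕ) : (Set.Icc a b).ncard = b + 1 - a := by
  rw [show (Set.Icc a b) = ↑(Finset.Icc a b) by simp, Set.ncard_coe_finset, Nat.card_Icc]

private lemma rank_image (hfin : P.Finite) (hinj : Set.InjOn firstCoord P) :
    rank P '' P = Set.Icc 1 P.ncard := by
  apply Set.eq_of_subset_of_ncard_le
  · rintro t ⟨p, hp, rfl⟩
    exact ⟨one_le_rank hfin hp, rank_le_ncard hfin p⟩
  · rw [Set.ncard_image_of_injOn (rank_injOn hfin hinj), ncard_Icc_nat]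
    omega
  · exact Set.finite_Icc _ _

private lemma rank_surj (hfin : P.Finite) (hinj : Set.InjOn firstCoord P) {t : ℕ}
    (h1 : 1 ≤ t) (h2 : t ≤ P.ncard) : ∃ p ∈ P, rank P p = t := by
  have ht : t ∈ rank P '' P := by
    rw [rank_image hfin hinj]; exact ⟨h1, h2⟩
  obtain ⟨p, hp, hpt⟩ := ht
  exact ⟨p, hp, hpt⟩

private lemma count_lemma (hfin : P.Finite) (hinj : Set.InjOn firstCoord P) {a R : ℕ}
    (ha : 1 ≤ a) (hR : R ≤ P.ncard) :
    {q ∈ P | a ≤ rank P q ∧ rank P q ≤ R}.ncard = R + 1 - a := by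
  have himg : rank P '' {q ∈ P | a ≤ rank P q ∧ rank P q ≤ R} = Set.Icc a R := by
    ext t
    constructor
    · rintro ⟨q, ⟨hq, h1, h2⟩, rfl⟩
      exact ⟨h1, h2⟩
    · rintro ⟨h1, h2⟩
      obtain ⟨p, hp, rfl⟩ := rank_surj hfin hinj (le_trans ha h1) (le_trans h2 hR)
      exact ⟨p, ⟨hp, h1, h2⟩, rfl⟩
  have hc := Set.ncard_image_of_injOn
    ((rank_injOn hfin hinj).mono (fun q hq => hq.1 :
      {q ∈ P | a ≤ rank P q ∧ rank P q ≤ R} ⊆ P))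
  rw [himg, ncard_Icc_nat] at hc
  omega

private lemma rank_section (hfin : P.Finite) (hinj : Set.InjOn firstCoord P) {a b : ℕ}
    (ha : 1 ≤ a) (hb : b ≤ P.ncard) {p : EuclideanSpace ℝ (Fin d)}
    (hp : p ∈ {q ∈ P | a ≤ rank P q ∧ rank P q ≤ b}) :
    rank {q ∈ P | a ≤ rank P q ∧ rank P q ≤ b} p = rank P p + 1 - a := by
  obtain ⟨hpP, hpa, hpb⟩ := hp
  have hset : {q ∈ {r ∈ P | a ≤ rank P r ∧ rank P r ≤ b} | firstCoord q ≤ firstCoord p}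
      = {q ∈ P | a ≤ rank P q ∧ rank P q ≤ rank P p} := by
    ext q
    simp only [Set.mem_setOf_eq]
    constructor
    · rintro ⟨⟨hq, h1, h2⟩, h3⟩
      exact ⟨hq, h1, (fc_le_iff hfin hpP hq).mp h3⟩
    · rintro ⟨hq, h1, h2⟩
      exact ⟨⟨hq, h1, le_trans h2 hpb⟩, (fc_le_iff hfin hpP hq).mpr h2⟩
  rw [rank, hset, count_lemma hfin hinj ha (le_trans hpb hb)]

private lemma sec_lemma (hfin : P.Finite) {P' : Set (EuclideanSpace ℝ (Fin d))}
    (hP' : P' ⊆ P) {a b : ℕ}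
    (hne : {p ∈ P' | a ≤ rank P p ∧ rank P p ≤ b}.Nonempty) :
    ∃ a' b', 1 ≤ a' ∧ a' ≤ b' ∧ b' ≤ P'.ncard ∧
      {p ∈ P' | a ≤ rank P p ∧ rank P p ≤ b} =
      {p ∈ P' | a' ≤ rank P' p ∧ rank P' p ≤ b'} := by
  have hfin' : P'.Finite := hfin.subset hP'
  have hSfin : ({p ∈ P' | a ≤ rank P p ∧ rank P p ≤ b}).Finite := sepFinite hfin' _
  have key : ∀ p ∈ P', ∀ q ∈ P', (rank P' q ≤ rank P' p ↔ rank P q ≤ rank P p) :=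
    fun p hp q hq =>
      (fc_le_iff hfin' hp hq).symm.trans (fc_le_iff hfin (hP' hp) (hP' hq))
  obtain ⟨p₁, hp₁, hmin⟩ := Set.exists_min_image _ (rank P) hSfin hne
  obtain ⟨p₂, hp₂, hmax⟩ := Set.exists_max_image _ (rank P) hSfin hne
  refine ⟨rank P' p₁, rank P' p₂, one_le_rank hfin' hp₁.1, ?_, rank_le_ncard hfin' _, ?_⟩
  · exact (key p₂ hp₂.1 p₁ hp₁.1).mpr (hmin p₂ hp₂)
  · ext p
    constructor
    · rintro ⟨hpP', h1, h2⟩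
      exact ⟨hpP', (key p hpP' p₁ hp₁.1).mpr (hmin p ⟨hpP', h1, h2⟩),
        (key p₂ hp₂.1 p hpP').mpr (hmax p ⟨hpP', h1, h2⟩)⟩
    · rintro ⟨hpP', h1, h2⟩
      have r1 : rank P p₁ ≤ rank P p := (key p hpP' p₁ hp₁.1).mp h1
      have r2 : rank P p ≤ rank P p₂ := (key p₂ hp₂.1 p hpP').mp h2
      exact ⟨hpP', le_trans hp₁.2.1 r1, le_trans r2 hp₂.2.2⟩

private lemma affGenPos_mono {m : ℕ} {Q Q' : Set (EuclideanSpace ℝ (Fin m))}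
    (h : AffGenPos Q) (hsub : Q' ⊆ Q) : AffGenPos Q' :=
  fun s hs hc => h s (subset_trans hs hsub) hc

private lemma regular_mono {P' : Set (EuclideanSpace ℝ (Fin d))}
    (h : Regular P) (hsub : P' ⊆ P) : Regular P' :=
  ⟨fun i => (h.1 i).mono hsub,
   affGenPos_mono h.2.1 (Set.image_mono hsub),
   fun S T hS hT => h.2.2 S T (hS.trans hsub) (hT.trans hsub)⟩

private lemma highAbove_mono {A B A' B' : Set (EuclideanSpace ℝ (Fin d))}
    (h : HighAbove A B) (hA : A' ⊆ A) (hB : B' ⊆ B) : HighAbove A' B' :=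
  ⟨h.1.mono hA hB, regular_mono h.2.1 (Set.union_subset_union hA hB),
   fun S T hS hT => h.2.2 S T (hS.trans hA) (hT.trans hB)⟩

private lemma modClass_congr {a a' b : ℕ} (h : a % b = a' % b)
    (P : Set (EuclideanSpace ℝ (Fin d))) : modClass a b P = modClass a' b P := by
  simp only [modClass, h]

private lemma firstCoord_proj (hd2 : 2 ≤ d) (x : EuclideanSpace ℝ (Fin d)) :
    firstCoord (proj x) = firstCoord x := by
  have h1 : 0 < d - 1 := by omega
  have h2 : 0 < d := by omega
  simp only [firstCoord, proj, dif_pos h1, dif_pos h2]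
  rfl

private lemma proj_injOn_s9 (hd2 : 2 ≤ d) (hinj : Set.InjOn firstCoord P) :
    Set.InjOn proj P := by
  intro p hp q hq h
  apply hinj hp hq
  rw [← firstCoord_proj hd2 p, ← firstCoord_proj hd2 q, h]

private lemma rank_proj (hfin : P.Finite) (hd2 : 2 ≤ d)
    (hinj : Set.InjOn firstCoord P) {p : EuclideanSpace ℝ (Fin d)} (hp : p ∈ P) :
    rank (proj '' P) (proj p) = rank P p := by
  have hset : {y ∈ proj '' P | firstCoord y ≤ firstCoord (proj p)} =
      proj '' {q ∈ P | firstCoord q ≤ firstCoord p} := by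
    ext y
    constructor
    · rintro ⟨⟨q, hq, rfl⟩, hle⟩
      exact ⟨q, ⟨hq, by rwa [firstCoord_proj hd2, firstCoord_proj hd2] at hle⟩, rfl⟩
    · rintro ⟨q, ⟨hq, hle⟩, rfl⟩
      exact ⟨⟨q, hq, rfl⟩, by rwa [firstCoord_proj hd2, firstCoord_proj hd2]⟩
  rw [rank, hset,
    Set.ncard_image_of_injOn ((proj_injOn_s9 hd2 hinj).mono
      (fun q hq => hq.1 : {q ∈ P | firstCoord q ≤ firstCoord p} ⊆ P))]
  rfl

end AuxOsc

theorem osc_section : ∀ {d : ℕ} {P : Set (EuclideanSpace ℝ (Fin d))}, IsOscillator d P →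
    ∀ a b : ℕ, 1 ≤ a → a ≤ b → b ≤ P.ncard →
    IsOscillator d {p ∈ P | a ≤ rank P p ∧ rank P p ≤ b} := by
  intro d₀ P₀ hP
  induction hP with
  | @single d p =>
    intro a b ha hab hb
    rw [Set.ncard_singleton] at hb
    obtain ⟨rfl, rfl⟩ : a = 1 ∧ b = 1 := by omega
    have hone : (1 : ℕ) ≤ rank {p} p := one_le_rank (Set.finite_singleton p) rfl
    have hle : rank {p} p ≤ 1 := by
      simpa using rank_le_ncard (Set.finite_singleton p) p
    have hq : {q ∈ ({p} : Set (EuclideanSpace ℝ (Fin _))) |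
        1 ≤ rank {p} q ∧ rank {p} q ≤ 1} = {p} := by
      ext q
      constructor
      · rintro ⟨hq, _⟩; exact hq
      · rintro rfl; exact ⟨rfl, hone, hle⟩
    rw [hq]
    exact IsOscillator.single p
  | dimOne P hfin =>
    intro a b _ _ _
    exact IsOscillator.dimOne _ (hfin.subset (fun q hq => hq.1))
  | @step d P hd hfin hcard hreg h1 h2 hab hproj ih1 ih2 ihproj =>
    intro a b ha hab0 hb
    have hd0 : 0 < d := by omega
    have hinj : Set.InjOn firstCoord P := by
      intro p hp q hq h
      simp only [firstCoord, dif_pos hd0] at h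
      exact hreg.1 ⟨0, hd0⟩ hp hq h
    by_cases habeq : a = b
    · subst habeq
      obtain ⟨p, hp, hrp⟩ := rank_surj hfin hinj ha hb
      have hq : {q ∈ P | a ≤ rank P q ∧ rank P q ≤ a} = {p} := by
        ext q
        constructor
        · rintro ⟨hq, hq1, hq2⟩
          exact rank_injOn hfin hinj hq hp (by omega)
        · rintro rfl
          exact ⟨hp, le_of_eq hrp.symm, le_of_eq hrp⟩
      rw [hq]
      exact IsOscillator.single p
    have hab2 : a < b := lt_of_le_of_ne hab0 habeq
    set Q := {p ∈ P | a ≤ rank P p ∧ rank P p ≤ b} with hQdef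
    have hQsub : Q ⊆ P := fun q hq => hq.1
    have hQfin : Q.Finite := hfin.subset hQsub
    obtain ⟨pa, hpa, hra⟩ := rank_surj hfin hinj ha (le_trans hab0 hb)
    obtain ⟨pb, hpb, hrb⟩ := rank_surj hfin hinj (by omega : 1 ≤ a + 1) (by omega)
    have hpaQ : pa ∈ Q := ⟨hpa, by omega, by omega⟩
    have hpbQ : pb ∈ Q := ⟨hpb, by omega, by omega⟩
    have hnepq : pa ≠ pb := by
      intro h
      rw [h] at hra
      omega
    have hcardQ : 2 ≤ Q.ncard := by
      have h2' : ({pa, pb} : Set (EuclideanSpace ℝ (Fin d))).ncard = 2 := Set.ncard_pair hnepq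
      have hle := Set.ncard_le_ncard (Set.pair_subset hpaQ hpbQ) hQfin
      omega
    have hrQ : ∀ p ∈ Q, rank Q p = rank P p + 1 - a := fun p hp =>
      rank_section hfin hinj ha hb hp
    have hregQ : Regular Q := regular_mono hreg hQsub
    have hmc1 : modClass 1 2 Q = {p ∈ modClass a 2 P | a ≤ rank P p ∧ rank P p ≤ b} := by
      ext p
      simp only [modClass, Set.mem_setOf_eq]
      constructor
      · rintro ⟨hpQ, hmod⟩
        have hf := hrQ p hpQ
        obtain ⟨hpP, hh1, hh2⟩ := hpQ
        exact ⟨⟨hpP, by omega⟩, hh1, hh2⟩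
      · rintro ⟨⟨hpP, hmod⟩, hh1, hh2⟩
        have hpQ : p ∈ Q := ⟨hpP, hh1, hh2⟩
        have hf := hrQ p hpQ
        exact ⟨hpQ, by omega⟩
    have hmc2 : modClass 2 2 Q = {p ∈ modClass (a+1) 2 P | a ≤ rank P p ∧ rank P p ≤ b} := by
      ext p
      simp only [modClass, Set.mem_setOf_eq]
      constructor
      · rintro ⟨hpQ, hmod⟩
        have hf := hrQ p hpQ
        obtain ⟨hpP, hh1, hh2⟩ := hpQ
        exact ⟨⟨hpP, by omega⟩, hh1, hh2⟩
      · rintro ⟨⟨hpP, hmod⟩, hh1, hh2⟩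
        have hpQ : p ∈ Q := ⟨hpP, hh1, hh2⟩
        have hf := hrQ p hpQ
        exact ⟨hpQ, by omega⟩
    have hsubP1 : modClass a 2 P ⊆ P := fun q hq => hq.1
    have hsubP2 : modClass (a+1) 2 P ⊆ P := fun q hq => hq.1
    have hne1 : {p ∈ modClass a 2 P | a ≤ rank P p ∧ rank P p ≤ b}.Nonempty :=
      ⟨pa, ⟨hpa, by omega⟩, by omega, by omega⟩
    have hne2 : {p ∈ modClass (a+1) 2 P | a ≤ rank P p ∧ rank P p ≤ b}.Nonempty :=
      ⟨pb, ⟨hpb, by omega⟩, by omega, by omega⟩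
    obtain ⟨a1, b1, ha1, hab1, hb1, heq1⟩ := sec_lemma hfin hsubP1 hne1
    obtain ⟨a2, b2, ha2, hab2', hb2, heq2⟩ := sec_lemma hfin hsubP2 hne2
    have hsub1 : modClass 1 2 Q ⊆ modClass a 2 P := by
      rw [hmc1]; exact fun q hq => hq.1
    have hsub2 : modClass 2 2 Q ⊆ modClass (a+1) 2 P := by
      rw [hmc2]; exact fun q hq => hq.1
    rcases Nat.mod_two_eq_zero_or_one a with hpar | hpar
    · -- a even
      have e1 : modClass a 2 P = modClass 2 2 P := modClass_congr (by omega) P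
      have e2 : modClass (a+1) 2 P = modClass 1 2 P := modClass_congr (by omega) P
      rw [e1] at heq1 hb1 hsub1 hmc1
      rw [e2] at heq2 hb2 hsub2 hmc2
      have hosc1 : IsOscillator d (modClass 1 2 Q) := by
        rw [hmc1, heq1]
        exact ih2 a1 b1 ha1 hab1 hb1
      have hosc2 : IsOscillator d (modClass 2 2 Q) := by
        rw [hmc2, heq2]
        exact ih1 a2 b2 ha2 hab2' hb2
      have habQ : HighAbove (modClass 1 2 Q) (modClass 2 2 Q) ∨
          HighAbove (modClass 2 2 Q) (modClass 1 2 Q) := by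
        rcases hab with h | h
        · exact Or.inr (highAbove_mono h hsub2 hsub1)
        · exact Or.inl (highAbove_mono h hsub1 hsub2)
      have hprojQ : proj '' Q = {y ∈ proj '' P |
          a ≤ rank (proj '' P) y ∧ rank (proj '' P) y ≤ b} := by
        ext y
        constructor
        · rintro ⟨p, hp, rfl⟩
          refine ⟨⟨p, hp.1, rfl⟩, ?_, ?_⟩
          · rw [rank_proj hfin hd hinj hp.1]; exact hp.2.1
          · rw [rank_proj hfin hd hinj hp.1]; exact hp.2.2
        · rintro ⟨⟨p, hpP, rfl⟩, hh1, hh2⟩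
          rw [rank_proj hfin hd hinj hpP] at hh1 hh2
          exact ⟨p, ⟨hpP, hh1, hh2⟩, rfl⟩
      have hoscproj : IsOscillator (d - 1) (proj '' Q) := by
        rw [hprojQ]
        refine ihproj a b ha hab0 ?_
        rw [Set.ncard_image_of_injOn (proj_injOn_s9 hd hinj)]
        exact hb
      exact IsOscillator.step Q hd hQfin hcardQ hregQ hosc1 hosc2 habQ hoscproj
    · -- a odd
      have e1 : modClass a 2 P = modClass 1 2 P := modClass_congr (by omega) P
      have e2 : modClass (a+1) 2 P = modClass 2 2 P := modClass_congr (by omega) P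
      rw [e1] at heq1 hb1 hsub1 hmc1
      rw [e2] at heq2 hb2 hsub2 hmc2
      have hosc1 : IsOscillator d (modClass 1 2 Q) := by
        rw [hmc1, heq1]
        exact ih1 a1 b1 ha1 hab1 hb1
      have hosc2 : IsOscillator d (modClass 2 2 Q) := by
        rw [hmc2, heq2]
        exact ih2 a2 b2 ha2 hab2' hb2
      have habQ : HighAbove (modClass 1 2 Q) (modClass 2 2 Q) ∨
          HighAbove (modClass 2 2 Q) (modClass 1 2 Q) := by
        rcases hab with h | h
        · exact Or.inl (highAbove_mono h hsub1 hsub2)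
        · exact Or.inr (highAbove_mono h hsub2 hsub1)
      have hprojQ : proj '' Q = {y ∈ proj '' P |
          a ≤ rank (proj '' P) y ∧ rank (proj '' P) y ≤ b} := by
        ext y
        constructor
        · rintro ⟨p, hp, rfl⟩
          refine ⟨⟨p, hp.1, rfl⟩, ?_, ?_⟩
          · rw [rank_proj hfin hd hinj hp.1]; exact hp.2.1
          · rw [rank_proj hfin hd hinj hp.1]; exact hp.2.2
        · rintro ⟨⟨p, hpP, rfl⟩, hh1, hh2⟩
          rw [rank_proj hfin hd hinj hpP] at hh1 hh2
          exact ⟨p, ⟨hpP, hh1, hh2⟩, rfl⟩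
      have hoscproj : IsOscillator (d - 1) (proj '' Q) := by
        rw [hprojQ]
        refine ihproj a b ha hab0 ?_
        rw [Set.ncard_image_of_injOn (proj_injOn_s9 hd hinj)]
        exact hb
      exact IsOscillator.step Q hd hQfin hcardQ hregQ hosc1 hosc2 habQ hoscproj

theorem stmt9 (d : ℕ) (hd : 1 ≤ d) (P : Set (EuclideanSpace ℝ (Fin d)))
    (hP : IsOscillator d P) (a b : ℕ) (ha : 1 ≤ a) (hab : a ≤ b) (hb : b ≤ P.ncard) :
    IsOscillator d {p ∈ P | a ≤ rank P p ∧ rank P p ≤ b} := by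
  exact osc_section hP a b ha hab hb
end
end
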